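/- arXiv:2007.08698 — 9 statements merged into one kernel-verified Lean document; each statement's English description precedes it below -/
import Mathlib

section
/- Let $d, n, k$ be positive integers with $n - 1 \ge d \ge 1$ and $\frac{dn}{d+1} \le k \le n-1$. Define $F_{d,m} = \sum_{j=0}^{m-1} \lceil \frac{d}{d+1} j \rceil$ and $F_{d,n,k} = F_{d-1,k} + k(n-k)$. Then $F_{d,n,k} > F_{d,n,k+1}$. -/
/-- `Fsum d m = ∑_{j=0}^{m-1} ⌈ d j / (d+1) ⌉`. -/
def Fsum (d m : ℕ) : ℤ := ∑ j ∈ Finset.range m, ⌈(d : ℚ) / (d + 1) * j⌉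

/-- `Fcon d n k = F_{d-1,k} + k (n-k)`. -/
def Fcon (d n k : ℕ) : ℤ := Fsum (d - 1) k + (k : ℤ) * ((n : ℤ) - k)

theorem stmt3 (d n k : ℕ) (hd : 1 ≤ d) (hdn : d ≤ n - 1)
    (hk1 : (d * n : ℚ) / (d + 1) ≤ k) (hk2 : k ≤ n - 1) :
    Fcon d n (k + 1) < Fcon d n k := by
  have hdQ : (0:ℚ) < (d:ℚ) := by exact_mod_cast hd
  have hn : 1 ≤ n := le_trans hd (le_trans hdn (Nat.sub_le n 1))
  -- cast of d-1
  have hd1 : ((d - 1 : ℕ) : ℚ) = (d : ℚ) - 1 := by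
    rw [Nat.cast_sub hd]; simp
  -- the ceiling term
  have hceil : ⌈((d - 1 : ℕ) : ℚ) / ((d - 1 : ℕ) + 1) * k⌉ = (k : ℤ) - (k : ℤ) / d := by
    have h2 : ((d - 1 : ℕ) : ℚ) + 1 = (d : ℚ) := by rw [hd1]; ring
    rw [h2, hd1]
    have : ((d:ℚ) - 1) / d * k = (-(((k:ℤ):ℚ) / (d:ℕ))) + ((k:ℤ):ℚ) := by
      field_simp; push_cast; ring
    rw [this, Int.ceil_add_intCast, Int.ceil_neg, Rat.floor_intCast_div_natCast]; ring
  -- key: n ≤ k + k/d  (integer division)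
  have hkey : (n : ℤ) ≤ (k : ℤ) + (k : ℤ) / d := by
    have h1 : (d : ℚ) * n ≤ ((d : ℚ) + 1) * k := by
      rw [div_le_iff₀ (by positivity)] at hk1; linarith
    have h1' : (d : ℤ) * n ≤ ((d : ℤ) + 1) * k := by exact_mod_cast h1
    have h2 : (d : ℤ) * ((n : ℤ) - k) ≤ k := by linarith
    have h3 : (n : ℤ) - k ≤ (k : ℤ) / d := by
      exact Int.le_ediv_iff_mul_le (by exact_mod_cast hd) |>.mpr (by linarith)
    linarith
  -- unfold
  have hsum : Fsum (d - 1) (k + 1) = Fsum (d - 1) k + ((k : ℤ) - (k : ℤ) / d) := by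
    rw [Fsum, Finset.sum_range_succ, hceil]; rfl
  simp only [Fcon, hsum]
  push_cast
  have hdiv0 : (0:ℤ) ≤ (k:ℤ) / d := Int.ediv_nonneg (by positivity) (by positivity)
  linarith
end

section
/- Let $d, n$ be positive integers with $d \ge 1$ and $n \ge d+1$. Define $F_{d,m} = \sum_{j=0}^{m-1} \lceil \frac{d}{d+1} j \rceil$ and $F_{d,n,k} = F_{d-1,k} + k(n-k)$ (with $F_{0,m} = 0$). Then $F_{d,n,\lfloor \frac{dn}{d+1} \rfloor} = F_{d,n,\lceil \frac{dn}{d+1} \rceil}$. -/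
theorem stmt4 (d n : ℕ) (hd : 1 ≤ d) (hn : d + 1 ≤ n) :
    Fcon d n ⌊(d * n : ℚ) / (d + 1)⌋₊ = Fcon d n ⌈(d * n : ℚ) / (d + 1)⌉₊ := by
  obtain ⟨e, rfl⟩ : ∃ e, d = e + 1 := ⟨d - 1, by omega⟩
  set k := (e + 1) * n / (e + 2) with hk
  set r := (e + 1) * n % (e + 2) with hr
  have hdn : (e + 1) * n = (e + 2) * k + r :=
    (Nat.div_add_mod ((e + 1) * n) (e + 2)).symm
  have hrlt : r < e + 2 := Nat.mod_lt _ (by omega)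
  have hx : ((e + 1 : ℕ) * n : ℚ) / ((e + 1 : ℕ) + 1) = (((e + 1) * n : ℕ) : ℚ) / (((e + 2 : ℕ)) : ℚ) := by
    push_cast; ring
  have hfloor : ⌊((e + 1 : ℕ) * n : ℚ) / ((e + 1 : ℕ) + 1)⌋₊ = k := by
    rw [hx, Nat.floor_div_natCast, Nat.floor_natCast]
  rcases Nat.eq_zero_or_pos r with hr0 | hr0
  · have hxk : ((e + 1 : ℕ) * n : ℚ) / ((e + 1 : ℕ) + 1) = (k : ℚ) := by
      have h2 : ((e + 1) * n : ℕ) = (e + 2) * k := by omega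
      rw [hx, h2]
      push_cast
      field_simp
    rw [hxk, Nat.floor_natCast, Nat.ceil_natCast]
  · -- r ≥ 1
    have hceil : ⌈((e + 1 : ℕ) * n : ℚ) / ((e + 1 : ℕ) + 1)⌉₊ = k + 1 := by
      rw [Nat.ceil_eq_iff (by omega)]
      constructor
      · simp only [Nat.add_sub_cancel]
        rw [hx, lt_div_iff₀ (by positivity)]
        have : (k * (e + 2) : ℕ) < (e + 1) * n := by
          calc k * (e + 2) = (e + 2) * k := by ring
          _ < (e + 2) * k + r := by omega
          _ = (e + 1) * n := hdn.symm
        exact_mod_cast this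
      · rw [hx, div_le_iff₀ (by positivity)]
        have : ((e + 1) * n : ℕ) ≤ (k + 1) * (e + 2) := by
          calc ((e + 1) * n : ℕ) = (e + 2) * k + r := hdn
          _ ≤ (e + 2) * k + (e + 2) := by omega
          _ = (k + 1) * (e + 2) := by ring
        exact_mod_cast this
    rw [hfloor, hceil]
    -- main equality
    have hZ : ((e : ℤ) + 1) * n = ((e : ℤ) + 2) * k + r := by exact_mod_cast hdn
    have hr1 : (1 : ℤ) ≤ (r : ℤ) := by exact_mod_cast hr0
    have hr2 : (r : ℤ) ≤ (e : ℤ) + 1 := by exact_mod_cast Nat.lt_succ_iff.mp hrlt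
    have hceilterm : ⌈(e : ℚ) / ((e : ℚ) + 1) * k⌉ = 2 * (k : ℤ) + 1 - n := by
      rw [Int.ceil_eq_iff]
      have hxk : (e : ℚ) / ((e : ℚ) + 1) * k = ((e : ℚ) * k) / ((e : ℚ) + 1) := by ring
      constructor
      · rw [hxk, lt_div_iff₀ (by positivity)]
        have h2 : ((2 * (k : ℤ) + 1 - n) - 1) * ((e : ℤ) + 1) < (e : ℤ) * k := by nlinarith [hZ]
        exact_mod_cast h2
      · rw [hxk, div_le_iff₀ (by positivity)]
        have h1 : (e : ℤ) * k ≤ (2 * (k : ℤ) + 1 - n) * ((e : ℤ) + 1) := by nlinarith [hZ]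
        exact_mod_cast h1
    simp only [Fcon, Nat.add_sub_cancel, Fsum, Finset.sum_range_succ]
    rw [hceilterm]
    push_cast
    ring
end

section
/- Let $d, n, k$ be positive integers with $n - 1 \ge d \ge 1$ and $\frac{dn}{d+1} \le k \le n-1$. Define $F_{d,m} = \sum_{j=0}^{m-1} \lceil \frac{d}{d+1} j \rceil$ (with $F_{0,m} = 0$) and $F_{d,n,k} = F_{d-1,k} + k(n-k)$. Then $F_{d,n-k} + F_{d-1,n} < F_{d,n,k}$. -/
lemma ceil_term (d j : ℕ) : ⌈(d : ℚ) / (d + 1) * j⌉ = (j : ℤ) - ((j / (d + 1) : ℕ) : ℤ) := by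
  have h1 : (d : ℚ) / (d + 1) * j = (j : ℚ) - (j : ℚ) / ((d : ℚ) + 1) := by
    have : ((d : ℚ) + 1) ≠ 0 := by positivity
    field_simp
    ring
  rw [h1, show (j : ℚ) - (j : ℚ) / ((d : ℚ) + 1) = -((j : ℚ) / ((d : ℚ) + 1) - (j : ℚ)) by ring,
    Int.ceil_neg, Int.floor_sub_natCast, show ((d : ℚ) + 1) = ((d + 1 : ℕ) : ℚ) by push_cast; ring,
    Rat.floor_natCast_div_natCast]
  push_cast [Int.natCast_div]
  ring

lemma Fsum_eq (d m : ℕ) :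
    Fsum d m = ∑ j ∈ Finset.range m, ((j : ℤ) - ((j / (d + 1) : ℕ) : ℤ)) := by
  unfold Fsum
  exact Finset.sum_congr rfl fun j _ => ceil_term d j

theorem stmt5 (d n k : ℕ) (hd : 1 ≤ d) (hdn : d ≤ n - 1)
    (hk1 : (d * n : ℚ) / (d + 1) ≤ k) (hk2 : k ≤ n - 1) :
    Fsum d (n - k) + Fsum (d - 1) n < Fcon d n k := by
  have hn2 : 2 ≤ n := by omega
  have hkn : k < n := by omega
  set r := n - k with hrdef
  have hr : 1 ≤ r := by omega
  have hkr : k + r = n := by omega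
  -- d * r ≤ k
  have hdr : d * r ≤ k := by
    have hpos : (0 : ℚ) < (d : ℚ) + 1 := by positivity
    have h2 : (d : ℚ) * n ≤ ((d : ℚ) + 1) * k := by
      rw [div_le_iff₀ hpos] at hk1
      linarith [hk1]
    have h3 : d * n ≤ (d + 1) * k := by exact_mod_cast h2
    have h4 : d * k + d * r ≤ d * k + k := by
      calc d * k + d * r = d * (k + r) := by ring
        _ = d * n := by rw [hkr]
        _ ≤ (d + 1) * k := h3
        _ = d * k + k := by ring
    exact Nat.le_of_add_le_add_left h4
  have hd1 : d - 1 + 1 = d := by omega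
  rw [Fcon, Fsum_eq, Fsum_eq, Fsum_eq, hd1]
  -- split the range n sum
  have hsplit : ∑ j ∈ Finset.range n, ((j : ℤ) - ((j / d : ℕ) : ℤ)) =
      (∑ j ∈ Finset.range k, ((j : ℤ) - ((j / d : ℕ) : ℤ))) +
      ∑ j ∈ Finset.Ico k n, ((j : ℤ) - ((j / d : ℕ) : ℤ)) := by
    rw [Finset.range_eq_Ico, ← Finset.sum_Ico_consecutive _ (Nat.zero_le k) (le_of_lt hkn), ← Finset.range_eq_Ico]
  rw [hsplit]
  have hsub1 : ∑ j ∈ Finset.range r, ((j : ℤ) - ((j / (d + 1) : ℕ) : ℤ)) =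
      (∑ j ∈ Finset.range r, (j : ℤ)) - ∑ j ∈ Finset.range r, ((j / (d + 1) : ℕ) : ℤ) :=
    Finset.sum_sub_distrib _ _
  have hsub2 : ∑ j ∈ Finset.Ico k n, ((j : ℤ) - ((j / d : ℕ) : ℤ)) =
      (∑ j ∈ Finset.Ico k n, (j : ℤ)) - ∑ j ∈ Finset.Ico k n, ((j / d : ℕ) : ℤ) :=
    Finset.sum_sub_distrib _ _
  set T : ℤ := ∑ j ∈ Finset.range r, (j : ℤ) with hT
  set A : ℤ := ∑ j ∈ Finset.range r, ((j / (d + 1) : ℕ) : ℤ) with hA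
  set B : ℤ := ∑ j ∈ Finset.Ico k n, ((j / d : ℕ) : ℤ) with hB
  have hIco : ∑ j ∈ Finset.Ico k n, (j : ℤ) = (k : ℤ) * r + T := by
    rw [Finset.sum_Ico_eq_sum_range]
    push_cast
    rw [Finset.sum_add_distrib, Finset.sum_const, Finset.card_range, nsmul_eq_mul]
    ring
  have hApos : 0 ≤ A := Finset.sum_nonneg fun j _ => by positivity
  have hBge : (r : ℤ) * r ≤ B := by
    have : ∀ j ∈ Finset.Ico k n, (r : ℤ) ≤ ((j / d : ℕ) : ℤ) := by
      intro j hj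
      rw [Finset.mem_Ico] at hj
      have : r ≤ j / d := by
        rw [Nat.le_div_iff_mul_le (by omega : 0 < d)]
        calc r * d = d * r := by ring
          _ ≤ k := hdr
          _ ≤ j := hj.1
      exact_mod_cast this
    calc (r : ℤ) * r = (Finset.Ico k n).card * (r : ℤ) := by
          rw [Nat.card_Ico, ← hrdef]
      _ = ∑ _j ∈ Finset.Ico k n, (r : ℤ) := by rw [Finset.sum_const, nsmul_eq_mul]
      _ ≤ B := Finset.sum_le_sum this
  have h2T : 2 * T = (r : ℤ) * r - r := by
    have := Finset.sum_range_id_mul_two r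
    have h' : (∑ i ∈ Finset.range r, (i : ℤ)) * 2 = (r : ℤ) * ((r : ℤ) - 1) := by
      have hcast : ((∑ i ∈ Finset.range r, i : ℕ) : ℤ) * 2 = ((r * (r - 1) : ℕ) : ℤ) := by
        exact_mod_cast congrArg (Nat.cast : ℕ → ℤ) this
      push_cast [Nat.cast_sub hr] at hcast
      convert hcast using 2 <;> push_cast <;> ring
    linarith [h']
  have hnk : (n : ℤ) - k = (r : ℤ) := by push_cast [← hkr]; ring
  rw [hsub1, hsub2, hIco, hnk]
  have hr1 : (1 : ℤ) ≤ (r : ℤ) := by exact_mod_cast hr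
  linarith
end

section
/- Let $d \ge 1$, $n \ge d+1$, and set $k = \lceil \frac{dn}{d+1} \rceil$. Define $e(n,k) = \sum_{m=k}^{n-1} \left( \lceil \frac{d-1}{d} m \rceil - \frac{d-1}{d} m \right)$. Then the average error satisfies $\frac{e(n,k)}{n-k} < \frac{d}{2(d+1)} + k - \frac{dn}{d+1}$. -/
open Finset

private lemma gauss2 (n : ℕ) : 2 * ((∑ i ∈ range n, i : ℕ) : ℤ) = n * n - n := by
  have h := Finset.sum_range_id_mul_two n
  rcases Nat.eq_zero_or_pos n with rfl | hn
  · simp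
  · have h2 : ((∑ i ∈ range n, i) * 2 : ℤ) = ((n * (n - 1) : ℕ) : ℤ) := by
      exact_mod_cast congrArg (Nat.cast : ℕ → ℤ) h
    rw [Nat.cast_mul, Nat.cast_sub hn] at h2
    push_cast at h2 ⊢
    linarith

private lemma periodSum (d : ℕ) (hd : 1 ≤ d) (a : ℕ) :
    ∑ j ∈ range d, (a + j) % d = ∑ j ∈ range d, j := by
  induction a with
  | zero =>
    refine Finset.sum_congr rfl fun j hj => ?_
    simp only [Finset.mem_range] at hj
    simp [Nat.mod_eq_of_lt hj]
  | succ a ih =>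
    obtain ⟨d', rfl⟩ : ∃ d', d = d' + 1 := ⟨d - 1, (Nat.succ_pred_eq_of_pos hd).symm⟩
    rw [Finset.sum_range_succ, ← ih, Finset.sum_range_succ' (fun j => (a + j) % (d' + 1))]
    congr 1
    · exact Finset.sum_congr rfl fun j _ => by congr 1; omega
    · have : a + 1 + d' = a + 0 + (d' + 1) := by omega
      rw [this, Nat.add_mod_right]

private lemma key (d r : ℕ) (hd : 1 ≤ d) (hr : r ≤ d) :
    ∀ ℓ : ℕ, 1 ≤ ℓ → 2 * (d + 1) * (∑ j ∈ range ℓ, (r + j) % d) < d * ℓ * (d + 2 * r) := by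
  intro ℓ
  induction ℓ using Nat.strong_induction_on with
  | _ ℓ ih =>
  intro hℓ
  rcases le_or_gt ℓ d with hld | hld
  · rcases le_or_gt (r + ℓ) d with hA | hB
    · -- no wraparound
      have hsum : ∑ j ∈ range ℓ, (r + j) % d = ℓ * r + ∑ j ∈ range ℓ, j := by
        rw [show ∑ j ∈ range ℓ, (r + j) % d = ∑ j ∈ range ℓ, (r + j) from
          Finset.sum_congr rfl fun j hj => Nat.mod_eq_of_lt (by
            simp only [Finset.mem_range] at hj; omega)]
        rw [Finset.sum_add_distrib, Finset.sum_const, Finset.card_range, smul_eq_mul]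
      rw [hsum]
      have hT := gauss2 ℓ
      set T : ℕ := ∑ j ∈ range ℓ, j with hTdef
      have goalZ : 2 * ((d : ℤ) + 1) * (ℓ * r + T) < d * ℓ * (d + 2 * r) := by
        have h1 : (1 : ℤ) ≤ ℓ := by exact_mod_cast hℓ
        have h2 : (r : ℤ) + ℓ ≤ d := by exact_mod_cast hA
        have h3 : (0 : ℤ) ≤ r := by positivity
        have h4 : (1 : ℤ) ≤ d := by exact_mod_cast hd
        nlinarith [mul_nonneg (mul_nonneg (by linarith : (0:ℤ) ≤ (ℓ:ℤ)) h3)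
            (by linarith : (0:ℤ) ≤ (d:ℤ) - 1),
          mul_nonneg (mul_nonneg (by linarith : (0:ℤ) ≤ (ℓ:ℤ)) (by linarith : (0:ℤ) ≤ (d:ℤ) + 1))
            (by linarith : (0:ℤ) ≤ (d:ℤ) - r - ℓ)]
      exact_mod_cast goalZ
    · -- one wraparound
      obtain ⟨c, hc⟩ : ∃ c, d = r + c := ⟨d - r, by omega⟩
      obtain ⟨a, ha⟩ : ∃ a, ℓ = c + a := ⟨ℓ - c, by omega⟩
      have ha1 : 1 ≤ a := by omega
      have har : a ≤ r := by omega
      have hsum : ∑ j ∈ range ℓ, (r + j) % d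
          = (c * r + ∑ j ∈ range c, j) + ∑ j ∈ range a, j := by
        rw [ha, Finset.sum_range_add]
        congr 1
        · rw [show ∑ j ∈ range c, (r + j) % d = ∑ j ∈ range c, (r + j) from
            Finset.sum_congr rfl fun j hj => Nat.mod_eq_of_lt (by
              simp only [Finset.mem_range] at hj; omega)]
          rw [Finset.sum_add_distrib, Finset.sum_const, Finset.card_range, smul_eq_mul]
        · refine Finset.sum_congr rfl fun j hj => ?_
          simp only [Finset.mem_range] at hj
          have h9 : r + (c + j) = d + j := by omega
          rw [h9, Nat.add_mod_left, Nat.mod_eq_of_lt (by omega)]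
      rw [hsum]
      obtain ⟨s, hs⟩ : ∃ s, r = a + s := ⟨r - a, by omega⟩
      obtain ⟨t, ht⟩ : ∃ t, a = t + 1 := ⟨a - 1, by omega⟩
      subst ht hs hc ha
      have hTc := gauss2 c
      have hTa := gauss2 (t + 1)
      set Tc : ℕ := ∑ j ∈ range c, j with hTcd
      set Ta : ℕ := ∑ j ∈ range (t + 1), j with hTad
      have eTc : 2 * ((c:ℤ) + (t + 1 + s) + 2) * Tc
          = ((c:ℤ) + (t + 1 + s) + 2) * ((c:ℤ) * c - c) := by
        linear_combination ((c:ℤ) + (t + 1 + s) + 2) * hTc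
      have eTa : 2 * ((c:ℤ) + (t + 1 + s) + 2) * Ta
          = ((c:ℤ) + (t + 1 + s) + 2) * (((t:ℤ) + 1) * ((t:ℤ) + 1) - ((t:ℤ) + 1)) := by
        push_cast at hTa
        linear_combination ((c:ℤ) + (t + 1 + s) + 2) * hTa
      have hs0 : (0:ℤ) ≤ (s:ℕ) := by positivity
      have ht0 : (0:ℤ) ≤ (t:ℕ) := by positivity
      have hc0 : (0:ℤ) ≤ (c:ℕ) := by positivity
      zify
      nlinarith [eTc, eTa,
        mul_nonneg (mul_nonneg hs0 hs0) ht0,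
        mul_nonneg (mul_nonneg hs0 hs0) hc0,
        mul_nonneg (mul_nonneg hs0 ht0) ht0,
        mul_nonneg (mul_nonneg hs0 ht0) hc0,
        mul_nonneg (mul_nonneg hs0 hc0) hc0,
        mul_nonneg (mul_nonneg ht0 ht0) ht0,
        mul_nonneg (mul_nonneg ht0 ht0) hc0,
        mul_nonneg (mul_nonneg ht0 hc0) hc0,
        mul_nonneg hs0 ht0, mul_nonneg hs0 hc0, mul_nonneg ht0 hc0,
        mul_nonneg hs0 hs0, mul_nonneg ht0 ht0, mul_nonneg hc0 hc0]
  · -- inductive step: ℓ > d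
    obtain ⟨ℓ', rfl⟩ : ∃ ℓ', ℓ = ℓ' + d := ⟨ℓ - d, by omega⟩
    have hℓ' : 1 ≤ ℓ' := by omega
    have hIH := ih ℓ' (by omega) hℓ'
    rw [Finset.sum_range_add]
    have hper : ∑ j ∈ range d, (r + (ℓ' + j)) % d = ∑ j ∈ range d, j := by
      have := periodSum d hd (r + ℓ')
      simpa [add_assoc] using this
    rw [hper]
    have hT := gauss2 d
    set T : ℕ := ∑ j ∈ range d, j
    set S : ℕ := ∑ j ∈ range ℓ', (r + j) % d
    have hIHZ : 2 * ((d : ℤ) + 1) * S < d * ℓ' * (d + 2 * r) := by exact_mod_cast hIH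
    have goalZ : 2 * ((d : ℤ) + 1) * (S + T) < d * (ℓ' + d) * (d + 2 * r) := by
      have h4 : (1 : ℤ) ≤ d := by exact_mod_cast hd
      have h3 : (0 : ℤ) ≤ r := by positivity
      nlinarith [mul_nonneg (mul_nonneg (by linarith : (0:ℤ) ≤ (d:ℤ)) (by linarith : (0:ℤ) ≤ (d:ℤ))) h3]
    exact_mod_cast goalZ

private lemma termEq (d m : ℕ) (hd : 1 ≤ d) :
    (⌈((d : ℚ) - 1) / d * m⌉ : ℚ) - ((d : ℚ) - 1) / d * m = ((m % d : ℕ) : ℚ) / d := by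
  have hd0 : (0 : ℚ) < d := by exact_mod_cast hd
  have hm : m = d * (m / d) + m % d := (Nat.div_add_mod m d).symm
  have hs : m % d < d := Nat.mod_lt m hd
  set q : ℕ := m / d
  set s : ℕ := m % d
  set C : ℤ := (d : ℤ) * q + s - q with hC
  have hval : ((d : ℚ) - 1) / d * m = (C : ℚ) - (s : ℚ) / d := by
    have hmQ : (m : ℚ) = d * q + s := by exact_mod_cast hm
    rw [hmQ]
    push_cast [hC]
    field_simp
    ring
  have hfloor : ⌊(s : ℚ) / d⌋ = 0 := by
    rw [Int.floor_eq_zero_iff]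
    constructor
    · positivity
    · rw [div_lt_one hd0]
      exact_mod_cast hs
  have hceil : ⌈((d : ℚ) - 1) / d * m⌉ = C := by
    rw [hval, show (C : ℚ) - (s : ℚ) / d = -((s : ℚ) / d) + (C : ℤ) from by ring,
      Int.ceil_add_intCast, Int.ceil_neg, hfloor]
    ring
  rw [hceil, hval]
  ring

theorem stmt6 (d n : ℕ) (hd : 1 ≤ d) (hn : d + 1 ≤ n) :
    letI k : ℕ := ⌈(d * n : ℚ) / (d + 1)⌉₊
    (∑ m ∈ Finset.Ico k n,
        ((⌈((d : ℚ) - 1) / d * m⌉ : ℚ) - ((d : ℚ) - 1) / d * m)) / ((n : ℚ) - k) <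
      (d : ℚ) / (2 * (d + 1)) + k - (d * n : ℚ) / (d + 1) := by
  set ℓ : ℕ := n / (d + 1) with hℓdef
  set r : ℕ := n % (d + 1) with hrdef
  have hn1 : n = (d + 1) * ℓ + r := (Nat.div_add_mod n (d + 1)).symm
  have hn1' : n = d * ℓ + r + ℓ := by rw [hn1]; ring
  have hr : r ≤ d := by
    have := Nat.mod_lt n (y := d + 1) (by omega)
    omega
  have hℓ : 1 ≤ ℓ := (Nat.one_le_div_iff (by omega)).2 hn
  have hd0 : (0 : ℚ) < d := by exact_mod_cast hd
  have hd1 : (0 : ℚ) < (d : ℚ) + 1 := by positivity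
  have hℓ0 : (0 : ℚ) < ℓ := by exact_mod_cast hℓ
  have hnQ : (n : ℚ) = ((d : ℚ) + 1) * ℓ + r := by exact_mod_cast hn1
  have hrQ : (r : ℚ) ≤ d := by exact_mod_cast hr
  have hr0 : (0 : ℚ) ≤ r := by positivity
  have hk : ⌈(d * n : ℚ) / (d + 1)⌉₊ = d * ℓ + r := by
    have h1 : 1 ≤ d * ℓ + r := by
      have := Nat.mul_le_mul hd hℓ
      omega
    rw [Nat.ceil_eq_iff (by omega)]
    constructor
    · rw [lt_div_iff₀ hd1]
      rw [show ((d * ℓ + r - 1 : ℕ) : ℚ) = (d : ℚ) * ℓ + r - 1 from by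
        push_cast [Nat.cast_sub h1]; ring]
      rw [hnQ]
      nlinarith
    · rw [div_le_iff₀ hd1, hnQ]
      push_cast
      nlinarith
  show (∑ m ∈ Finset.Ico (⌈(d * n : ℚ) / (d + 1)⌉₊) n,
        ((⌈((d : ℚ) - 1) / d * m⌉ : ℚ) - ((d : ℚ) - 1) / d * m)) /
        ((n : ℚ) - (⌈(d * n : ℚ) / (d + 1)⌉₊ : ℕ)) <
      (d : ℚ) / (2 * (d + 1)) + ((⌈(d * n : ℚ) / (d + 1)⌉₊ : ℕ) : ℚ) - (d * n : ℚ) / (d + 1)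
  rw [hk]
  set S : ℕ := ∑ j ∈ range ℓ, (r + j) % d with hSdef
  have hsum : (∑ m ∈ Finset.Ico (d * ℓ + r) n,
      ((⌈((d : ℚ) - 1) / d * m⌉ : ℚ) - ((d : ℚ) - 1) / d * m)) = (S : ℚ) / d := by
    rw [Finset.sum_Ico_eq_sum_range, show n - (d * ℓ + r) = ℓ from by omega]
    rw [show (S : ℚ) / d = ∑ j ∈ range ℓ, (((r + j) % d : ℕ) : ℚ) / d from by
      rw [← Finset.sum_div, hSdef]; push_cast; ring]
    refine Finset.sum_congr rfl fun j hj => ?_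
    rw [termEq d (d * ℓ + r + j) hd]
    congr 2
    rw [show d * ℓ + r + j = d * ℓ + (r + j) from by ring, Nat.mul_add_mod]
  rw [hsum]
  have hden : (n : ℚ) - ((d * ℓ + r : ℕ) : ℚ) = (ℓ : ℚ) := by
    push_cast
    rw [hnQ]; ring
  rw [hden]
  have hRHS : (d : ℚ) / (2 * (d + 1)) + ((d * ℓ + r : ℕ) : ℚ) - (d * n : ℚ) / (d + 1)
      = ((d : ℚ) + 2 * r) / (2 * ((d : ℚ) + 1)) := by
    rw [hnQ]
    push_cast
    field_simp
    ring
  rw [hRHS]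
  have hkey := key d r hd hr ℓ hℓ
  have hkeyQ : 2 * ((d : ℚ) + 1) * (S : ℚ) < (d : ℚ) * ℓ * ((d : ℚ) + 2 * r) := by
    exact_mod_cast hkey
  rw [div_div, div_lt_div_iff₀ (by positivity) (by positivity)]
  nlinarith [hkeyQ]
end

section
/- Let $A$ be a $(d+1) \times (d+1)$ symmetric matrix with rational entries, and let $\Delta_d = \{x \in \mathbb{R}^{d+1} : \sum_i x_i = 1, \; x_i \ge 0\}$ be the standard simplex. Then the quadratic form $f(x) = \frac{1}{2} x^T A x$ attains its maximum over $\Delta_d$ at some point with all rational coordinates. -/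
open scoped Matrix

open Finset

private lemma symm_swap' {n : Type*} [Fintype n] (A : Matrix n n ℝ) (hA : A.IsSymm) (x v : n → ℝ) :
    x ⬝ᵥ A *ᵥ v = v ⬝ᵥ A *ᵥ x := by
  conv_lhs => rw [Matrix.dotProduct_mulVec, ← hA.eq, Matrix.vecMul_transpose,
    dotProduct_comm]

private lemma expand_quad' {n : Type*} [Fintype n] (A : Matrix n n ℝ) (hA : A.IsSymm)
    (x v : n → ℝ) (t : ℝ) :
    (x + t • v) ⬝ᵥ A *ᵥ (x + t • v) =
      x ⬝ᵥ A *ᵥ x + 2 * t * (v ⬝ᵥ A *ᵥ x) + t ^ 2 * (v ⬝ᵥ A *ᵥ v) := by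
  simp only [Matrix.mulVec_add, Matrix.mulVec_smul, add_dotProduct,
    dotProduct_add, smul_dotProduct, dotProduct_smul, smul_eq_mul]
  rw [symm_swap' A hA x v]
  ring

private lemma cast_mulVec' {ι : Type*} [Fintype ι] (B : Matrix ι ι ℚ) (z : ι → ℚ) :
    (B.map ((↑) : ℚ → ℝ)) *ᵥ (fun i => (z i : ℝ)) = fun i => ((B *ᵥ z) i : ℝ) := by
  funext i
  simp only [Matrix.mulVec, dotProduct, Matrix.map_apply]
  push_cast
  rfl

private lemma rat_solution' {ι : Type*} [Fintype ι] [DecidableEq ι] (B : Matrix ι ι ℚ)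
    (b : ι → ℚ) (x : ι → ℝ) (hinj : Function.Injective ((B.map ((↑) : ℚ → ℝ)).mulVec))
    (hx : (B.map ((↑) : ℚ → ℝ)) *ᵥ x = fun i => (b i : ℝ)) : ∀ i, ∃ q : ℚ, x i = q := by
  have hinjQ : Function.Injective (B.mulVecLin) := by
    rw [← LinearMap.ker_eq_bot, eq_bot_iff]
    intro z hz
    simp only [LinearMap.mem_ker, Matrix.mulVecLin_apply] at hz
    have h0 : (B.map ((↑) : ℚ → ℝ)) *ᵥ (fun i => (z i : ℝ)) =
        (B.map ((↑) : ℚ → ℝ)) *ᵥ (0 : ι → ℝ) := by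
      rw [cast_mulVec', hz, Matrix.mulVec_zero]; simp; rfl
    have := hinj h0
    have hz0 : ∀ i, z i = 0 := by
      intro i
      have h := congrFun this i
      simp only [Pi.zero_apply] at h
      exact_mod_cast h
    simpa [Submodule.mem_bot] using (funext hz0 : z = 0)
  have hsurj : Function.Surjective (B.mulVecLin) :=
    LinearMap.injective_iff_surjective.mp hinjQ
  obtain ⟨z, hzb⟩ := hsurj b
  simp only [Matrix.mulVecLin_apply] at hzb
  have : (B.map ((↑) : ℚ → ℝ)) *ᵥ (fun i => (z i : ℝ)) = (B.map ((↑) : ℚ → ℝ)) *ᵥ x := by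
    rw [cast_mulVec', hzb, hx]
  have := hinj this
  exact fun i => ⟨z i, by rw [← congrFun this i]⟩

private lemma restr_quad' {d : ℕ} (A : Matrix (Fin (d + 2)) (Fin (d + 2)) ℝ) (i₀ : Fin (d + 2))
    (u : Fin (d + 2) → ℝ) (hu : u i₀ = 0) :
    u ⬝ᵥ A *ᵥ u = (u ∘ i₀.succAbove) ⬝ᵥ (A.submatrix i₀.succAbove i₀.succAbove) *ᵥ
      (u ∘ i₀.succAbove) := by
  simp only [dotProduct, Matrix.mulVec, Matrix.submatrix_apply, Function.comp_apply]
  rw [Fin.sum_univ_succAbove (fun i => u i * ∑ j, A i j * u j) i₀, hu, zero_mul, zero_add]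
  refine Finset.sum_congr rfl fun i _ => ?_
  congr 1
  rw [Fin.sum_univ_succAbove (fun j => A (i₀.succAbove i) j * u j) i₀, hu, mul_zero, zero_add]

private lemma cont_quad' {n : Type*} [Fintype n] (A : Matrix n n ℝ) :
    Continuous fun y : n → ℝ => y ⬝ᵥ A *ᵥ y := by
  simp only [dotProduct, Matrix.mulVec]
  fun_prop

private lemma grad_const' {n : ℕ} (A : Matrix (Fin (n + 1)) (Fin (n + 1)) ℝ) (hA : A.IsSymm)
    (x : Fin (n + 1) → ℝ) (hx1 : ∑ i, x i = 1) (hpos : ∀ i, 0 < x i)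
    (hmax : ∀ y : Fin (n + 1) → ℝ, (∑ i, y i = 1) → (∀ i, 0 ≤ y i) →
      y ⬝ᵥ A *ᵥ y ≤ x ⬝ᵥ A *ᵥ x) :
    ∀ i j, (A *ᵥ x) i = (A *ᵥ x) j := by
  have key : ∀ i j : Fin (n + 1), i ≠ j → (A *ᵥ x) i ≤ (A *ᵥ x) j := by
    intro i j hij
    set v : Fin (n + 1) → ℝ := Pi.single i 1 - Pi.single j 1 with hv
    have hvsum : ∑ k, v k = 0 := by
      simp [hv, Finset.sum_sub_distrib, Finset.sum_pi_single]
    have hvdot : ∀ w : Fin (n + 1) → ℝ, v ⬝ᵥ w = w i - w j := by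
      intro w
      simp [hv, dotProduct, Pi.single_apply, sub_mul, Finset.sum_sub_distrib,
        Finset.sum_ite_eq]
    set g : ℝ := v ⬝ᵥ A *ᵥ x with hg
    set Q : ℝ := v ⬝ᵥ A *ᵥ v with hQ
    have hineq : ∀ t : ℝ, t ∈ Set.Ioc (0:ℝ) (x j) → g ≤ -t * Q / 2 := by
      rintro t ⟨ht0, htj⟩
      have hfeas1 : ∑ k, (x + t • v) k = 1 := by
        simp [Finset.sum_add_distrib, hx1, ← Finset.mul_sum, hvsum]
      have hfeas2 : ∀ k, 0 ≤ (x + t • v) k := by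
        intro k
        rcases eq_or_ne k j with rfl | hkj
        · have : v k = -1 := by simp [hv, Pi.single_apply, hij.symm]
          simp only [Pi.add_apply, Pi.smul_apply, smul_eq_mul, this]
          linarith
        · have : 0 ≤ v k := by
            rcases eq_or_ne k i with rfl | hki
            · simp [hv, Pi.single_apply, hij]
            · simp [hv, Pi.single_apply, hki, hkj]
          have := hpos k
          have h2 : 0 ≤ t * v k := mul_nonneg ht0.le ‹0 ≤ v k›
          simp only [Pi.add_apply, Pi.smul_apply, smul_eq_mul]
          linarith
      have := hmax _ hfeas1 hfeas2
      rw [expand_quad' A hA x v t] at this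
      nlinarith
    have htend : Filter.Tendsto (fun t : ℝ => -t * Q / 2) (nhdsWithin 0 (Set.Ioi 0)) (nhds 0) := by
      have hc : Continuous fun t : ℝ => -t * Q / 2 := by fun_prop
      have h0 : Filter.Tendsto (fun t : ℝ => -t * Q / 2) (nhds 0) (nhds (-(0:ℝ) * Q / 2)) :=
        hc.tendsto 0
      simpa using h0.mono_left nhdsWithin_le_nhds
    have hg0 : g ≤ 0 := by
      refine ge_of_tendsto htend ?_
      filter_upwards [Ioc_mem_nhdsGT_of_mem ⟨le_refl (0:ℝ), hpos j⟩] with t ht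
      exact hineq t ht
    have := hvdot (A *ᵥ x)
    rw [← hg] at this
    linarith [this ▸ hg0]
  intro i j
  rcases eq_or_ne i j with rfl | hij
  · rfl
  · exact le_antisymm (key i j hij) (key j i (Ne.symm hij))

private lemma qneg' {n : ℕ} (A : Matrix (Fin (n + 1)) (Fin (n + 1)) ℝ) (hA : A.IsSymm)
    (x : Fin (n + 1) → ℝ) (hx1 : ∑ i, x i = 1) (hpos : ∀ i, 0 < x i)
    (hmax : ∀ y : Fin (n + 1) → ℝ, (∑ i, y i = 1) → (∀ i, 0 ≤ y i) →
      y ⬝ᵥ A *ᵥ y ≤ x ⬝ᵥ A *ᵥ x)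
    (hgrad : ∀ i j, (A *ᵥ x) i = (A *ᵥ x) j)
    (hnz : ¬ ∃ y : Fin (n + 1) → ℝ, (∑ i, y i = 1) ∧ (∀ i, 0 ≤ y i) ∧ (∃ i, y i = 0) ∧
        ∀ z : Fin (n + 1) → ℝ, (∑ i, z i = 1) → (∀ i, 0 ≤ z i) → z ⬝ᵥ A *ᵥ z ≤ y ⬝ᵥ A *ᵥ y) :
    ∀ v : Fin (n + 1) → ℝ, v ≠ 0 → (∑ i, v i = 0) → v ⬝ᵥ A *ᵥ v < 0 := by
  intro v hv hvsum
  have hlin : v ⬝ᵥ A *ᵥ x = 0 := by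
    have : v ⬝ᵥ A *ᵥ x = ∑ i, v i * (A *ᵥ x) 0 := by
      refine Finset.sum_congr rfl fun i _ => ?_
      rw [hgrad i 0]
    rw [dotProduct] at this ⊢
    rw [this, ← Finset.sum_mul, hvsum, zero_mul]
  have hQle : v ⬝ᵥ A *ᵥ v ≤ 0 := by
    set t0 : ℝ := Finset.univ.inf' Finset.univ_nonempty (fun i => x i / (|v i| + 1)) with ht0
    have ht0pos : 0 < t0 := by
      rw [ht0, Finset.lt_inf'_iff]
      intro i _
      exact div_pos (hpos i) (by positivity)
    have hfeas2 : ∀ k, 0 ≤ (x + t0 • v) k := by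
      intro k
      have h1 : t0 ≤ x k / (|v k| + 1) := Finset.inf'_le _ (Finset.mem_univ k)
      have h2 : t0 * (|v k| + 1) ≤ x k := by
        rw [← le_div_iff₀ (by positivity)]; exact h1
      have h3 : |t0 * v k| ≤ x k := by
        rw [abs_mul, abs_of_pos ht0pos]
        nlinarith [abs_nonneg (v k)]
      have := abs_le.mp h3
      simp only [Pi.add_apply, Pi.smul_apply, smul_eq_mul]
      linarith [this.1]
    have hfeas1 : ∑ k, (x + t0 • v) k = 1 := by
      simp [Finset.sum_add_distrib, hx1, ← Finset.mul_sum, hvsum]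
    have := hmax _ hfeas1 hfeas2
    rw [expand_quad' A hA x v t0, hlin] at this
    nlinarith [pow_pos ht0pos 2]
  rcases lt_or_eq_of_le hQle with h | h
  · exact h
  exfalso
  have hneg : ∃ i, v i < 0 := by
    by_contra hc
    push_neg at hc
    apply hv
    funext i
    have := (Finset.sum_eq_zero_iff_of_nonneg (fun i _ => hc i)).mp hvsum i (Finset.mem_univ i)
    simpa using this
  obtain ⟨i₁, hi₁⟩ := hneg
  set T : Finset (Fin (n + 1)) := Finset.univ.filter (fun i => v i < 0) with hT
  have hTne : T.Nonempty := ⟨i₁, by simp [hT, hi₁]⟩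
  obtain ⟨i₂, hi₂T, hi₂min⟩ := Finset.exists_min_image T (fun i => x i / (-v i)) hTne
  have hvi₂ : v i₂ < 0 := by simpa [hT] using hi₂T
  set t1 : ℝ := x i₂ / (-v i₂) with ht1
  have ht1pos : 0 < t1 := div_pos (hpos i₂) (by linarith)
  set z : Fin (n + 1) → ℝ := x + t1 • v with hz
  have hzfeas2 : ∀ k, 0 ≤ z k := by
    intro k
    simp only [hz, Pi.add_apply, Pi.smul_apply, smul_eq_mul]
    rcases lt_or_ge (v k) 0 with hk | hk
    · have hkT : k ∈ T := by simp [hT, hk]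
      have := hi₂min k hkT
      have h2 : t1 * (-v k) ≤ x k := (le_div_iff₀ (by linarith : (0:ℝ) < -v k)).mp this
      linarith
    · nlinarith [ht1pos.le, hpos k]
  have hzfeas1 : ∑ k, z k = 1 := by
    simp [hz, Finset.sum_add_distrib, hx1, ← Finset.mul_sum, hvsum]
  have hzval : z ⬝ᵥ A *ᵥ z = x ⬝ᵥ A *ᵥ x := by
    rw [hz, expand_quad' A hA x v t1, hlin, h]
    ring
  have hzzero : z i₂ = 0 := by
    have hne : v i₂ ≠ 0 := ne_of_lt hvi₂
    simp only [hz, Pi.add_apply, Pi.smul_apply, smul_eq_mul, ht1]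
    field_simp
    ring
  exact hnz ⟨z, hzfeas1, hzfeas2, ⟨i₂, hzzero⟩, fun w hw1 hw2 => hzval ▸ hmax w hw1 hw2⟩

private lemma case2_rat' {n : ℕ} (A : Matrix (Fin (n + 1)) (Fin (n + 1)) ℝ)
    (hrat : ∀ i j, ∃ q : ℚ, A i j = q)
    (x : Fin (n + 1) → ℝ) (hx1 : ∑ i, x i = 1)
    (hgrad : ∀ i j, (A *ᵥ x) i = (A *ᵥ x) j)
    (hqneg : ∀ v : Fin (n + 1) → ℝ, v ≠ 0 → (∑ i, v i = 0) → v ⬝ᵥ A *ᵥ v < 0) :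
    ∀ i, ∃ q : ℚ, x i = q := by
  classical
  set c : ℝ := (A *ᵥ x) 0 with hc
  choose Aq hAq using hrat
  set B : Matrix (Fin (n + 1) ⊕ Unit) (Fin (n + 1) ⊕ Unit) ℚ := Matrix.of fun i j =>
    match i, j with
    | .inl i, .inl j => Aq i j
    | .inl _, .inr _ => -1
    | .inr _, .inl _ => 1
    | .inr _, .inr _ => 0 with hB
  have hBval : ∀ (u : Fin (n + 1) ⊕ Unit → ℝ),
      ((B.map ((↑) : ℚ → ℝ)) *ᵥ u) = Sum.elim
        (fun i => (A *ᵥ (u ∘ Sum.inl)) i - u (Sum.inr ()))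
        (fun _ => ∑ j, u (Sum.inl j)) := by
    intro u
    funext k
    cases k with
    | inl i =>
      simp only [Matrix.mulVec, dotProduct, Fintype.sum_sum_type, Matrix.map_apply, hB,
        Matrix.of_apply, Sum.elim_inl, Function.comp_apply]
      simp [Matrix.mulVec, dotProduct, hAq, sub_eq_add_neg]
    | inr u0 =>
      simp only [Matrix.mulVec, dotProduct, Fintype.sum_sum_type, Matrix.map_apply, hB,
        Matrix.of_apply, Sum.elim_inr]
      simp
  have hinj : Function.Injective ((B.map ((↑) : ℚ → ℝ)).mulVec) := by
    intro w w' hww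
    have hker : (B.map ((↑) : ℚ → ℝ)) *ᵥ (w - w') = 0 := by
      rw [Matrix.mulVec_sub, hww, sub_self]
    set u := w - w' with hu
    rw [hBval] at hker
    have h1 : ∀ i, (A *ᵥ (u ∘ Sum.inl)) i = u (Sum.inr ()) := by
      intro i
      have := congrFun hker (Sum.inl i)
      simp only [Sum.elim_inl, Pi.zero_apply] at this
      linarith
    have h2 : ∑ j, u (Sum.inl j) = 0 := by
      have := congrFun hker (Sum.inr ())
      simpa using this
    set v : Fin (n + 1) → ℝ := u ∘ Sum.inl with hv
    have hv0 : v = 0 := by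
      by_contra hvne
      have hQ : v ⬝ᵥ A *ᵥ v = 0 := by
        have : v ⬝ᵥ A *ᵥ v = ∑ i, v i * u (Sum.inr ()) := by
          refine Finset.sum_congr rfl fun i _ => ?_
          rw [h1 i]
        have h2' : ∑ i, v i = 0 := h2
        rw [dotProduct] at this ⊢
        rw [this, ← Finset.sum_mul, h2', zero_mul]
      exact absurd hQ (ne_of_lt (hqneg v hvne h2))
    have hc0 : u (Sum.inr ()) = 0 := by
      have := h1 0
      rw [hv0] at this
      simpa using this.symm
    have : u = 0 := by
      funext k
      cases k with
      | inl i => exact congrFun hv0 i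
      | inr u0 => cases u0; exact hc0
    have := sub_eq_zero.mp (hu ▸ this)
    exact this
  have hsol : (B.map ((↑) : ℚ → ℝ)) *ᵥ (Sum.elim x fun _ => c) =
      fun k => ((Sum.elim (0 : Fin (n + 1) → ℚ) (fun _ => 1) k : ℚ) : ℝ) := by
    rw [hBval]
    funext k
    cases k with
    | inl i =>
      have hcomp : (Sum.elim x fun _ => c) ∘ (Sum.inl : Fin (n+1) → Fin (n+1) ⊕ Unit) = x :=
        Sum.elim_comp_inl _ _
      simp [hcomp, hgrad i 0, hc]
    | inr u0 =>
      simp [hx1]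
  have := rat_solution' B (Sum.elim (0 : Fin (n + 1) → ℚ) (fun _ => 1)) (Sum.elim x fun _ => c)
    hinj hsol
  intro i
  exact this (Sum.inl i)

private lemma key_lemma : ∀ (d : ℕ) (A : Matrix (Fin (d + 1)) (Fin (d + 1)) ℝ),
    A.IsSymm → (∀ i j, ∃ q : ℚ, A i j = q) →
    ∃ x : Fin (d + 1) → ℝ,
      (∑ i, x i = 1) ∧ (∀ i, 0 ≤ x i) ∧ (∀ i, ∃ q : ℚ, x i = q) ∧
      ∀ y : Fin (d + 1) → ℝ, (∑ i, y i = 1) → (∀ i, 0 ≤ y i) →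
        y ⬝ᵥ A.mulVec y ≤ x ⬝ᵥ A.mulVec x := by
  intro d
  induction d with
  | zero =>
    intro A _ _
    refine ⟨fun _ => 1, by simp, fun _ => zero_le_one, fun _ => ⟨1, by norm_num⟩, ?_⟩
    intro y hy1 _
    have hy : y = fun _ => 1 := by
      funext i
      have h0 : i = 0 := Fin.eq_zero i
      rw [h0]
      rw [Fin.sum_univ_one] at hy1
      exact hy1
    rw [hy]
  | succ d ih =>
    intro A hsymm hrat
    by_cases hz : ∃ y : Fin (d + 2) → ℝ, (∑ i, y i = 1) ∧ (∀ i, 0 ≤ y i) ∧ (∃ i, y i = 0) ∧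
        ∀ z : Fin (d + 2) → ℝ, (∑ i, z i = 1) → (∀ i, 0 ≤ z i) → z ⬝ᵥ A *ᵥ z ≤ y ⬝ᵥ A *ᵥ y
    · obtain ⟨y, hy1, hy2, ⟨i₀, hyi₀⟩, hymax⟩ := hz
      set A' := A.submatrix i₀.succAbove i₀.succAbove with hA'def
      have hA' : A'.IsSymm := Matrix.IsSymm.ext fun i j => hsymm.apply _ _
      have hrat' : ∀ i j, ∃ q : ℚ, A' i j = q := fun i j => hrat _ _
      obtain ⟨x', hx1', hx2', hx3', hmax'⟩ := ih A' hA' hrat'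
      set x : Fin (d + 2) → ℝ := i₀.insertNth 0 x' with hxdef
      have hxi₀ : x i₀ = 0 := by
        rw [hxdef]; exact Fin.insertNth_apply_same (α := fun _ => ℝ) i₀ 0 x'
      have hcomp : ∀ k, x (i₀.succAbove k) = x' k := by
        intro k; rw [hxdef]; exact Fin.insertNth_apply_succAbove (α := fun _ => ℝ) i₀ 0 x' k
      have hxsum : ∑ i, x i = 1 := by
        rw [Fin.sum_univ_succAbove x i₀, hxi₀, zero_add]
        simp only [hcomp]
        exact hx1'
      have hxnn : ∀ i, 0 ≤ x i := by
        intro j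
        rcases eq_or_ne j i₀ with rfl | hne
        · rw [hxi₀]
        · obtain ⟨k, rfl⟩ := Fin.exists_succAbove_eq (Ne.symm (Ne.symm hne))
          rw [hcomp k]
          exact hx2' k
      have hxrat : ∀ i, ∃ q : ℚ, x i = q := by
        intro j
        rcases eq_or_ne j i₀ with rfl | hne
        · exact ⟨0, by rw [hxi₀]; norm_num⟩
        · obtain ⟨k, rfl⟩ := Fin.exists_succAbove_eq (Ne.symm (Ne.symm hne))
          rw [hcomp k]
          exact hx3' k
      refine ⟨x, hxsum, hxnn, hxrat, ?_⟩
      intro z hz1 hz2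
      have hy' : ∑ k, y (i₀.succAbove k) = 1 := by
        have := Fin.sum_univ_succAbove y i₀
        rw [hy1, hyi₀, zero_add] at this
        exact this.symm
      have hxq : x ⬝ᵥ A *ᵥ x = x' ⬝ᵥ A' *ᵥ x' := by
        rw [restr_quad' A i₀ x hxi₀, show x ∘ i₀.succAbove = x' from funext hcomp]
      calc z ⬝ᵥ A *ᵥ z ≤ y ⬝ᵥ A *ᵥ y := hymax z hz1 hz2
        _ = (y ∘ i₀.succAbove) ⬝ᵥ A' *ᵥ (y ∘ i₀.succAbove) := restr_quad' A i₀ y hyi₀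
        _ ≤ x' ⬝ᵥ A' *ᵥ x' := hmax' _ hy' (fun k => hy2 _)
        _ = x ⬝ᵥ A *ᵥ x := hxq.symm
    · -- every maximizer has full support
      obtain ⟨x, hxS, hxmax⟩ := (isCompact_stdSimplex ℝ (Fin (d + 2))).exists_isMaxOn
        ⟨fun _ => (d + 2 : ℝ)⁻¹, by
          constructor
          · intro i
            positivity
          · simp [Finset.sum_const, Finset.card_univ]
            rw [mul_inv_cancel₀]
            positivity⟩
        ((cont_quad' A).continuousOn)
      obtain ⟨hx2, hx1⟩ := hxS
      have hmax : ∀ y : Fin (d + 2) → ℝ, (∑ i, y i = 1) → (∀ i, 0 ≤ y i) →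
          y ⬝ᵥ A *ᵥ y ≤ x ⬝ᵥ A *ᵥ x := by
        intro y h1 h2
        exact hxmax (⟨h2, h1⟩ : y ∈ stdSimplex ℝ (Fin (d + 2)))
      have hpos : ∀ i, 0 < x i := by
        intro i
        rcases lt_or_eq_of_le (hx2 i) with h | h
        · exact h
        · exact absurd ⟨x, hx1, hx2, ⟨i, h.symm⟩, hmax⟩ hz
      have hgrad := grad_const' A hsymm x hx1 hpos hmax
      have hqneg := qneg' A hsymm x hx1 hpos hmax hgrad hz
      have hxrat := case2_rat' A hrat x hx1 hgrad hqneg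
      exact ⟨x, hx1, hx2, hxrat, hmax⟩

theorem stmt7 (d : ℕ) (A : Matrix (Fin (d + 1)) (Fin (d + 1)) ℝ)
    (hsymm : A.IsSymm) (hrat : ∀ i j, ∃ q : ℚ, A i j = q) :
    ∃ x : Fin (d + 1) → ℝ,
      (∑ i, x i = 1) ∧ (∀ i, 0 ≤ x i) ∧ (∀ i, ∃ q : ℚ, x i = q) ∧
      ∀ y : Fin (d + 1) → ℝ, (∑ i, y i = 1) → (∀ i, 0 ≤ y i) →
        1 / 2 * (y ⬝ᵥ A.mulVec y) ≤ 1 / 2 * (x ⬝ᵥ A.mulVec x) := by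
  obtain ⟨x, h1, h2, h3, h4⟩ := key_lemma d A hsymm hrat
  exact ⟨x, h1, h2, h3, fun y hy1 hy2 => by linarith [h4 y hy1 hy2]⟩
end

section
/- Let $A$ be a $(d+1) \times (d+1)$ symmetric matrix with rational entries, $\Delta_d = \{x \in \mathbb{R}^{d+1} : \sum_i x_i = 1, x_i \ge 0\}$, $\Delta_d^o = \{x \in \Delta_d : x_i > 0 \; \forall i\}$, and $f(x) = \frac{1}{2}x^T A x$ with $M = \max_{\Delta_d} f$. If there exists $x \in \Delta_d^o$ with $f(x) = M$, then there exists $x' \in \Delta_d^o$ with all rational coordinates and $f(x') = M$. -/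
open scoped Matrix


/-- Rational points are dense in the solution set of a rational linear system. -/
lemma rat_dense_solutions {ι : Type*} [Fintype ι] :
    ∀ (n : ℕ) (B : ι → Fin n → ℚ) (b : ι → ℚ) (x : Fin n → ℝ),
    (∀ i, ∑ j, (B i j : ℝ) * x j = (b i : ℝ)) → ∀ ε : ℝ, 0 < ε →
    ∃ y : Fin n → ℚ, (∀ i, ∑ j, B i j * y j = b i) ∧ ∀ j, |(y j : ℝ) - x j| < ε := by
  intro n
  induction n with
  | zero =>
    intro B b x hx ε hε
    refine ⟨fun j => 0, fun i => ?_, fun j => j.elim0⟩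
    have := hx i
    simp only [Finset.univ_eq_empty, Finset.sum_empty] at this ⊢
    exact_mod_cast this
  | succ n IH =>
    intro B b x hx ε hε
    by_cases hcol : ∀ i, B i (Fin.last n) = 0
    · -- last variable doesn't appear
      set B' : ι → Fin n → ℚ := fun i j => B i j.castSucc with hB'
      have hx' : ∀ i, ∑ j, (B' i j : ℝ) * x j.castSucc = (b i : ℝ) := by
        intro i
        have := hx i
        rw [Fin.sum_univ_castSucc] at this
        simpa [hcol i] using this
      obtain ⟨y', hy1, hy2⟩ := IH B' b (fun j => x j.castSucc) hx' ε hε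
      obtain ⟨q, hq⟩ := exists_rat_near (x (Fin.last n)) hε
      refine ⟨Fin.snoc y' q, fun i => ?_, fun j => ?_⟩
      · rw [Fin.sum_univ_castSucc]
        simp only [Fin.snoc_castSucc, Fin.snoc_last, hcol i, zero_mul, add_zero]
        exact hy1 i
      · refine Fin.lastCases ?_ (fun j' => ?_) j
        · simpa [abs_sub_comm] using hq
        · simpa using hy2 j'
    · push_neg at hcol
      obtain ⟨i₀, hc⟩ := hcol
      set c : ℚ := B i₀ (Fin.last n) with hcdef
      have hcR : (c : ℝ) ≠ 0 := by exact_mod_cast hc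
      -- eliminated (division-free) system
      set C : ι → Fin n → ℚ :=
        fun i j => c * B i j.castSucc - B i (Fin.last n) * B i₀ j.castSucc with hC
      set b' : ι → ℚ := fun i => c * b i - B i (Fin.last n) * b i₀ with hb'
      have hexpR : ∀ (i : ι) (z : Fin n → ℝ), ∑ j, (C i j : ℝ) * z j
          = (c : ℝ) * ∑ j : Fin n, (B i j.castSucc : ℝ) * z j
            - (B i (Fin.last n) : ℝ) * ∑ j : Fin n, (B i₀ j.castSucc : ℝ) * z j := by
        intro i z
        simp only [Finset.mul_sum, ← Finset.sum_sub_distrib]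
        refine Finset.sum_congr rfl fun j _ => ?_
        push_cast [hC]
        ring
      have hexpQ : ∀ (i : ι) (z : Fin n → ℚ), ∑ j, C i j * z j
          = c * ∑ j : Fin n, B i j.castSucc * z j
            - B i (Fin.last n) * ∑ j : Fin n, B i₀ j.castSucc * z j := by
        intro i z
        simp only [Finset.mul_sum, ← Finset.sum_sub_distrib]
        refine Finset.sum_congr rfl fun j _ => ?_
        rw [hC]; ring
      have hxlast : x (Fin.last n)
          = ((b i₀ : ℝ) - ∑ j : Fin n, (B i₀ j.castSucc : ℝ) * x j.castSucc) / (c : ℝ) := by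
        have := hx i₀
        rw [Fin.sum_univ_castSucc] at this
        field_simp
        linarith [this]
      have hx' : ∀ i, ∑ j, (C i j : ℝ) * x j.castSucc = (b' i : ℝ) := by
        intro i
        have h1 := hx i
        have h2 := hx i₀
        rw [Fin.sum_univ_castSucc] at h1 h2
        rw [hexpR]
        push_cast [hb']
        linear_combination (c : ℝ) * h1 - (B i (Fin.last n) : ℝ) * h2
      -- bound
      set M : ℝ := ∑ j : Fin n, |(B i₀ j.castSucc : ℝ)| with hM
      have hM0 : 0 ≤ M := Finset.sum_nonneg fun j _ => abs_nonneg _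
      set ε' : ℝ := min ε (ε * |(c : ℝ)| / (M + 1)) with hε'
      have hε'0 : 0 < ε' := by
        apply lt_min hε
        positivity
      obtain ⟨y', hy1, hy2⟩ := IH C b' (fun j => x j.castSucc) hx' ε' hε'0
      set q : ℚ := (b i₀ - ∑ j : Fin n, B i₀ j.castSucc * y' j) / c with hqdef
      have hrow : ∑ j : Fin n, B i₀ j.castSucc * y' j + c * q = b i₀ := by
        rw [hqdef]; field_simp; ring
      refine ⟨Fin.snoc y' q, fun i => ?_, fun j => ?_⟩
      · rw [Fin.sum_univ_castSucc]
        simp only [Fin.snoc_castSucc, Fin.snoc_last]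
        have h1q := hy1 i
        rw [hexpQ] at h1q
        rw [hb'] at h1q
        have hkey : c * ((∑ j : Fin n, B i j.castSucc * y' j) + B i (Fin.last n) * q - b i)
            = 0 := by
          linear_combination h1q + B i (Fin.last n) * hrow
        rcases mul_eq_zero.mp hkey with h | h
        · exact absurd h hc
        · linarith
      · refine Fin.lastCases ?_ (fun j' => ?_) j
        · simp only [Fin.snoc_last]
          have hqR : (q : ℝ)
              = ((b i₀ : ℝ) - ∑ j : Fin n, (B i₀ j.castSucc : ℝ) * (y' j : ℝ)) / (c : ℝ) := by
            rw [hqdef]; push_cast; ring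
          rw [hqR, hxlast, div_sub_div_same, abs_div, div_lt_iff₀ (abs_pos.mpr hcR)]
          have hd : ((b i₀ : ℝ) - ∑ j : Fin n, (B i₀ j.castSucc : ℝ) * (y' j : ℝ))
              - ((b i₀ : ℝ) - ∑ j : Fin n, (B i₀ j.castSucc : ℝ) * x j.castSucc)
              = ∑ j : Fin n, (B i₀ j.castSucc : ℝ) * (x j.castSucc - (y' j : ℝ)) := by
            simp only [mul_sub]
            rw [Finset.sum_sub_distrib]
            ring
          rw [hd]
          have hcpos : (0:ℝ) < |(c : ℝ)| := abs_pos.mpr hcR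
          calc |∑ j : Fin n, (B i₀ j.castSucc : ℝ) * (x j.castSucc - (y' j : ℝ))|
              ≤ ∑ j : Fin n, |(B i₀ j.castSucc : ℝ)| * |x j.castSucc - (y' j : ℝ)| := by
                refine (Finset.abs_sum_le_sum_abs _ _).trans ?_
                refine Finset.sum_le_sum fun j _ => ?_
                rw [abs_mul]
            _ ≤ ∑ j : Fin n, |(B i₀ j.castSucc : ℝ)| * ε' := by
                refine Finset.sum_le_sum fun j _ => ?_
                refine mul_le_mul_of_nonneg_left ?_ (abs_nonneg _)
                rw [abs_sub_comm]
                exact (hy2 j).le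
            _ = M * ε' := by rw [hM, Finset.sum_mul]
            _ ≤ M * (ε * |(c : ℝ)| / (M + 1)) :=
                mul_le_mul_of_nonneg_left (min_le_right _ _) hM0
            _ = (ε * |(c : ℝ)|) * (M / (M + 1)) := by ring
            _ < (ε * |(c : ℝ)|) * 1 := by
                refine mul_lt_mul_of_pos_left ?_ (by positivity)
                rw [div_lt_one (by positivity)]
                linarith
            _ = ε * |(c : ℝ)| := mul_one _
        · simp only [Fin.snoc_castSucc]
          exact lt_of_lt_of_le (hy2 j') (min_le_left _ _)

theorem stmt8 (d : ℕ) (A : Matrix (Fin (d + 1)) (Fin (d + 1)) ℝ)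
    (hsymm : A.IsSymm) (hrat : ∀ i j, ∃ q : ℚ, A i j = q)
    (x : Fin (d + 1) → ℝ) (hx1 : ∑ i, x i = 1) (hx2 : ∀ i, 0 < x i)
    (hmax : ∀ y : Fin (d + 1) → ℝ, (∑ i, y i = 1) → (∀ i, 0 ≤ y i) →
      1 / 2 * (y ⬝ᵥ A.mulVec y) ≤ 1 / 2 * (x ⬝ᵥ A.mulVec x)) :
    ∃ x' : Fin (d + 1) → ℝ,
      (∑ i, x' i = 1) ∧ (∀ i, 0 < x' i) ∧ (∀ i, ∃ q : ℚ, x' i = q) ∧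
      1 / 2 * (x' ⬝ᵥ A.mulVec x') = 1 / 2 * (x ⬝ᵥ A.mulVec x) := by
  have hsym : ∀ v w : Fin (d+1) → ℝ, v ⬝ᵥ A.mulVec w = w ⬝ᵥ A.mulVec v := by
    intro v w
    rw [Matrix.dotProduct_mulVec, ← Matrix.mulVec_transpose, hsymm.eq, dotProduct_comm]
  set g : Fin (d+1) → ℝ := A.mulVec x with hg
  set c : ℝ := x ⬝ᵥ A.mulVec x with hcdef
  -- first order conditions: g is constant
  have hle : ∀ k l : Fin (d+1), k ≠ l → g k ≤ g l := by
    intro k l hkl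
    set v : Fin (d+1) → ℝ :=
      fun i => (if i = k then (1:ℝ) else 0) - (if i = l then 1 else 0) with hv
    have hvsum : ∑ i, v i = 0 := by
      simp [hv, Finset.sum_sub_distrib]
    have hvg : v ⬝ᵥ g = g k - g l := by
      simp [hv, dotProduct, sub_mul, Finset.sum_sub_distrib, ite_mul]
    set Q : ℝ := v ⬝ᵥ A.mulVec v with hQ
    have key : ∀ t : ℝ, 0 < t → t ≤ x l → 2*t*(g k - g l) + t^2 * Q ≤ 0 := by
      intro t ht0 htl
      set y : Fin (d+1) → ℝ := x + t • v with hy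
      have hy1 : ∑ i, y i = 1 := by
        simp only [hy, Pi.add_apply, Pi.smul_apply, smul_eq_mul]
        rw [Finset.sum_add_distrib, ← Finset.mul_sum, hvsum, hx1]
        ring
      have hy2 : ∀ i, 0 ≤ y i := by
        intro i
        simp only [hy, Pi.add_apply, Pi.smul_apply, smul_eq_mul, hv]
        rcases eq_or_ne i k with rfl | hik
        · simp [hkl]
          nlinarith [hx2 i]
        · rcases eq_or_ne i l with rfl | hil
          · simp [hik]
            nlinarith [hx2 i]
          · simp [hik, hil]
            exact (hx2 i).le
      have hm := hmax y hy1 hy2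
      have hexp : y ⬝ᵥ A.mulVec y = c + 2*t*(g k - g l) + t^2 * Q := by
        have e1 : A.mulVec y = A.mulVec x + t • A.mulVec v := by
          rw [hy, Matrix.mulVec_add, Matrix.mulVec_smul]
        rw [hy, e1]
        rw [add_dotProduct, dotProduct_add, dotProduct_add,
          smul_dotProduct, dotProduct_smul, dotProduct_smul,
          smul_dotProduct]
        have e2 : x ⬝ᵥ A.mulVec v = v ⬝ᵥ A.mulVec x := hsym x v
        rw [smul_eq_mul, smul_eq_mul, smul_eq_mul, smul_eq_mul, e2, ← hg, hvg, ← hcdef, ← hQ]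
        ring
      rw [hexp] at hm
      linarith
    by_contra hcon
    push_neg at hcon
    set a : ℝ := g k - g l with ha
    have ha0 : 0 < a := by rw [ha]; linarith
    set t : ℝ := min (x l) (a / (|Q| + 1)) with htdef
    have ht0 : 0 < t := lt_min (hx2 l) (by positivity)
    have h1 := key t ht0 (min_le_left _ _)
    have h2 : t ≤ a / (|Q| + 1) := min_le_right _ _
    have h3 : t * |Q| ≤ a := by
      have : t * |Q| ≤ (a / (|Q| + 1)) * |Q| :=
        mul_le_mul_of_nonneg_right h2 (abs_nonneg _)
      have h4 : (a / (|Q| + 1)) * |Q| ≤ a := by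
        rw [div_mul_eq_mul_div, div_le_iff₀ (by positivity)]
        nlinarith [abs_nonneg Q]
      linarith
    have h5 : -(t^2 * |Q|) ≤ t^2 * Q := by
      nlinarith [sq_nonneg t, neg_abs_le Q]
    nlinarith [sq_nonneg t, mul_pos ht0 ha0, mul_le_mul_of_nonneg_left h3 ht0.le]
  have hgc : ∀ k, g k = c := by
    have heq : ∀ k l : Fin (d+1), g k = g l := by
      intro k l
      rcases eq_or_ne k l with rfl | h
      · rfl
      · exact le_antisymm (hle k l h) (hle l k h.symm)
    intro k
    have : c = ∑ i, x i * g i := by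
      rw [hcdef, dotProduct]
    rw [this]
    have : ∀ i, x i * g i = x i * g k := fun i => by rw [heq i k]
    rw [Finset.sum_congr rfl fun i _ => this i, ← Finset.sum_mul, hx1, one_mul]
  -- rationalize A
  set Aq : Fin (d+1) → Fin (d+1) → ℚ := fun i j => (hrat i j).choose with hAq
  have hAqs : ∀ i j, A i j = (Aq i j : ℝ) := fun i j => (hrat i j).choose_spec
  -- the rational linear system
  set Bq : Option (Fin (d+1)) → Fin (d+2) → ℚ :=
    fun o => Option.elim o (Fin.snoc (fun _ => 1) 0)
      (fun i => Fin.snoc (fun j => Aq i j) (-1)) with hBq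
  set bq : Option (Fin (d+1)) → ℚ := fun o => Option.elim o 1 (fun _ => 0) with hbq
  set z : Fin (d+2) → ℝ := Fin.snoc x c with hzdef
  have hz : ∀ o, ∑ j, (Bq o j : ℝ) * z j = (bq o : ℝ) := by
    intro o
    cases o with
    | none =>
      rw [Fin.sum_univ_castSucc]
      simp only [hBq, hbq, hzdef, Option.elim, Fin.snoc_castSucc, Fin.snoc_last]
      push_cast
      simp [hx1]
    | some i =>
      rw [Fin.sum_univ_castSucc]
      simp only [hBq, hbq, hzdef, Option.elim, Fin.snoc_castSucc, Fin.snoc_last]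
      push_cast
      have : ∑ j : Fin (d+1), (Aq i j : ℝ) * x j = g i := by
        rw [hg, Matrix.mulVec, dotProduct]
        exact Finset.sum_congr rfl fun j _ => by rw [hAqs i j]
      rw [this, hgc i]
      ring
  obtain ⟨i₀, _, hi₀⟩ := Finset.exists_min_image Finset.univ x ⟨0, Finset.mem_univ 0⟩
  obtain ⟨yq, heq, hclose⟩ :=
    rat_dense_solutions (d+2) Bq bq z hz (x i₀) (hx2 i₀)
  set x' : Fin (d+1) → ℝ := fun i => ((yq i.castSucc : ℚ) : ℝ) with hx'
  set lam : ℝ := (yq (Fin.last (d+1)) : ℝ) with hlam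
  have hsum' : ∑ i, x' i = 1 := by
    have := heq none
    rw [Fin.sum_univ_castSucc] at this
    simp only [hBq, hbq, Option.elim, Fin.snoc_castSucc, Fin.snoc_last] at this
    have : ∑ j : Fin (d+1), (yq j.castSucc : ℝ) = 1 := by exact_mod_cast by simpa using this
    simpa [hx'] using this
  have hpos' : ∀ i, 0 < x' i := by
    intro i
    have h := hclose i.castSucc
    rw [hzdef] at h
    simp only [Fin.snoc_castSucc] at h
    have := abs_lt.mp h
    have hmin := hi₀ i (Finset.mem_univ i)
    simp only [hx']
    linarith [this.1]
  have hgrad : ∀ i, (A.mulVec x') i = lam := by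
    intro i
    have h := heq (some i)
    rw [Fin.sum_univ_castSucc] at h
    simp only [hBq, hbq, Option.elim, Fin.snoc_castSucc, Fin.snoc_last] at h
    have hR : ∑ j : Fin (d+1), (Aq i j : ℝ) * (yq j.castSucc : ℝ)
        + (-1) * (yq (Fin.last (d+1)) : ℝ) = 0 := by exact_mod_cast by push_cast; exact_mod_cast congrArg (Rat.cast (K := ℝ)) h
    rw [Matrix.mulVec, dotProduct]
    have : ∑ j, A i j * x' j = ∑ j : Fin (d+1), (Aq i j : ℝ) * (yq j.castSucc : ℝ) :=
      Finset.sum_congr rfl fun j _ => by rw [hAqs i j, hx']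
    rw [this, hlam]
    linarith [hR]
  have hlamc : lam = c := by
    have e1 : x ⬝ᵥ A.mulVec x' = lam := by
      rw [dotProduct]
      have : ∀ i, x i * (A.mulVec x') i = x i * lam := fun i => by rw [hgrad i]
      rw [Finset.sum_congr rfl fun i _ => this i, ← Finset.sum_mul, hx1, one_mul]
    have e2 : x' ⬝ᵥ A.mulVec x = c := by
      rw [dotProduct]
      have : ∀ i, x' i * g i = x' i * c := fun i => by rw [hgc i]
      rw [← hg]
      rw [Finset.sum_congr rfl fun i _ => this i, ← Finset.sum_mul, hsum', one_mul]
    rw [← e1, hsym x x', e2]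
  have hval : x' ⬝ᵥ A.mulVec x' = c := by
    rw [dotProduct]
    have : ∀ i, x' i * (A.mulVec x') i = x' i * lam := fun i => by rw [hgrad i]
    rw [Finset.sum_congr rfl fun i _ => this i, ← Finset.sum_mul, hsum', one_mul, hlamc]
  exact ⟨x', hsum', hpos', fun i => ⟨yq i.castSucc, rfl⟩, by rw [hval]⟩
end

section
/- Let $A$ be a symmetric real matrix, $\Delta$ the standard simplex, $f(x) = \frac{1}{2}x^T A x$. Suppose $x$ lies in the relative interior of $\Delta$ and maximizes $f$ over $\Delta$, and suppose $x' \in \Delta$, $x' \neq x$, also satisfies $f(x') = f(x)$. Then $f$ is constant on the line through $x$ and $x'$: for all $t \in \mathbb{R}$ with $(1-t)x + tx' \in \Delta$, $f((1-t)x + tx') = f(x)$. -/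
open scoped Matrix

theorem stmt9 (d : ℕ) (A : Matrix (Fin (d + 1)) (Fin (d + 1)) ℝ) (hsymm : A.IsSymm)
    (x x' : Fin (d + 1) → ℝ)
    (hx1 : ∑ i, x i = 1) (hx2 : ∀ i, 0 < x i)
    (hmax : ∀ y : Fin (d + 1) → ℝ, (∑ i, y i = 1) → (∀ i, 0 ≤ y i) →
      1 / 2 * (y ⬝ᵥ A.mulVec y) ≤ 1 / 2 * (x ⬝ᵥ A.mulVec x))
    (hx'1 : ∑ i, x' i = 1) (hx'2 : ∀ i, 0 ≤ x' i) (hne : x' ≠ x)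
    (heq : 1 / 2 * (x' ⬝ᵥ A.mulVec x') = 1 / 2 * (x ⬝ᵥ A.mulVec x)) :
    ∀ t : ℝ, (∀ i, 0 ≤ (1 - t) * x i + t * x' i) →
      1 / 2 * ((fun i => (1 - t) * x i + t * x' i) ⬝ᵥ
          A.mulVec fun i => (1 - t) * x i + t * x' i) =
        1 / 2 * (x ⬝ᵥ A.mulVec x) := by
  -- setup
  set v : Fin (d + 1) → ℝ := fun i => x' i - x i with hv
  have hsum_v : ∑ i, v i = 0 := by
    simp only [hv, Finset.sum_sub_distrib, hx1, hx'1, sub_self]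
  have hsym : ∀ u w : Fin (d + 1) → ℝ, u ⬝ᵥ A.mulVec w = w ⬝ᵥ A.mulVec u := by
    intro u w
    rw [Matrix.dotProduct_mulVec, ← Matrix.mulVec_transpose, hsymm.eq,
      dotProduct_comm]
  set c : ℝ := v ⬝ᵥ A.mulVec x with hc
  set q : ℝ := v ⬝ᵥ A.mulVec v with hq
  have expand : ∀ s : ℝ, (fun i => x i + s * v i) ⬝ᵥ A.mulVec (fun i => x i + s * v i)
      = x ⬝ᵥ A.mulVec x + s * (2 * c) + s ^ 2 * q := by
    intro s
    have h1 : (fun i => x i + s * v i) = x + s • v := by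
      funext i; simp [smul_eq_mul]
    have h2 : x ⬝ᵥ A.mulVec v = c := by rw [hc, hsym]
    rw [h1, Matrix.mulVec_add, Matrix.mulVec_smul, add_dotProduct,
      smul_dotProduct, dotProduct_add, dotProduct_add,
      dotProduct_smul, dotProduct_smul, h2, smul_eq_mul, smul_eq_mul,
      smul_eq_mul, ← hc, ← hq]
    ring
  have hx'eq : x' = fun i => x i + 1 * v i := by
    funext i; simp [hv]
  have key1 : 2 * c + q = 0 := by
    have h := heq
    rw [hx'eq, expand 1] at h
    nlinarith [h]
  -- q ≥ 0 from midpoint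
  have hq_nonneg : 0 ≤ q := by
    have hsum : ∑ i, (x i + (1 / 2 : ℝ) * v i) = 1 := by
      rw [Finset.sum_add_distrib, ← Finset.mul_sum, hsum_v, hx1]; ring
    have hnn : ∀ i, 0 ≤ x i + (1 / 2 : ℝ) * v i := by
      intro i
      have := (hx2 i).le
      have := hx'2 i
      simp only [hv]
      linarith
    have h := hmax (fun i => x i + (1 / 2 : ℝ) * v i) hsum hnn
    rw [expand (1 / 2)] at h
    nlinarith [h, key1]
  -- q ≤ 0 from small step in direction -v
  have hq_nonpos : q ≤ 0 := by
    obtain ⟨i0, -, hi0⟩ := Finset.exists_min_image Finset.univ x ⟨0, Finset.mem_univ 0⟩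
    set m : ℝ := x i0 with hm
    have hm_pos : 0 < m := hx2 i0
    have hx'le : ∀ i, x' i ≤ 1 := by
      intro i
      have h := Finset.single_le_sum (f := x') (fun j _ => hx'2 j) (Finset.mem_univ i)
      rw [hx'1] at h
      exact h
    have hvle : ∀ i, v i ≤ 1 := by
      intro i
      have := (hx2 i).le
      have := hx'le i
      simp only [hv]
      linarith
    have hsum : ∑ i, (x i + (-m) * v i) = 1 := by
      rw [Finset.sum_add_distrib, ← Finset.mul_sum, hsum_v, hx1]; ring
    have hnn : ∀ i, 0 ≤ x i + (-m) * v i := by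
      intro i
      have h1 : m * v i ≤ m * 1 := by
        exact mul_le_mul_of_nonneg_left (hvle i) hm_pos.le
      have h2 : m ≤ x i := hi0 i (Finset.mem_univ i)
      nlinarith
    have h := hmax (fun i => x i + (-m) * v i) hsum hnn
    rw [expand (-m)] at h
    nlinarith [h, key1, hm_pos]
  have hq0 : q = 0 := le_antisymm hq_nonpos hq_nonneg
  have hc0 : c = 0 := by linarith [key1]
  intro t _
  have hfun : (fun i => (1 - t) * x i + t * x' i) = fun i => x i + t * v i := by
    funext i; simp only [hv]; ring
  rw [hfun, expand t, hq0, hc0]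
  ring
end

section
/- Let $N$ points $x_1, \dots, x_N$ (not necessarily distinct) lie on the unit sphere $S^d \subset \mathbb{R}^{d+1}$. Define the perpendicularity energy $E_\infty = \#\{(i,j) : i < j, \; x_i \cdot x_j = 0\}$. If there is an orthonormal basis $v_1, \dots, v_{d+1}$ of $\mathbb{R}^{d+1}$ such that each $x_i \in \{v_j, -v_j\}$ where $j \equiv i \pmod{d+1}$, then $E_\infty = \sum_{m=0}^{N-1} \lceil \frac{d}{d+1} m \rceil$, and this is the maximum of $E_\infty$ over all configurations of $N$ points on $S^d$. -/
open scoped RealInnerProductSpace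

/-- Number of perpendicular pairs in a configuration of `N` points on the sphere. -/
noncomputable def perpPairs {d N : ℕ} (x : Fin N → EuclideanSpace ℝ (Fin (d + 1))) : ℕ :=
  Set.ncard {p : Fin N × Fin N | p.1 < p.2 ∧ ⟪x p.1, x p.2⟫ = 0}

open Finset

section Aux

variable {d N : ℕ}

/-- The perpendicularity graph of a configuration. -/
private def perpGraph (y : Fin N → EuclideanSpace ℝ (Fin (d + 1))) : SimpleGraph (Fin N) where
  Adj i j := i ≠ j ∧ ⟪y i, y j⟫ = 0
  symm := ⟨fun i j h => ⟨h.1.symm, by rw [real_inner_comm]; exact h.2⟩⟩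
  loopless := ⟨fun i h => h.1 rfl⟩

private lemma perpGraph_adj (y : Fin N → EuclideanSpace ℝ (Fin (d + 1))) (i j : Fin N) :
    (perpGraph y).Adj i j ↔ i ≠ j ∧ ⟪y i, y j⟫ = 0 := Iff.rfl

/-- Bridging `ncard` of the edge set and `edgeFinset` card. -/
private lemma ncard_edgeSet {V : Type*} (G : SimpleGraph V) [Fintype G.edgeSet] :
    G.edgeSet.ncard = #G.edgeFinset := by
  rw [SimpleGraph.edgeFinset]
  exact Set.ncard_eq_toFinset_card' _

/-- The number of `<`-ordered adjacent pairs equals the number of edges. -/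
private lemma card_lt_pairs {n : ℕ} (G : SimpleGraph (Fin n)) [DecidableRel G.Adj] :
    #(univ.filter fun p : Fin n × Fin n => p.1 < p.2 ∧ G.Adj p.1 p.2) = #G.edgeFinset := by
  have h2 := G.two_mul_card_edgeFinset
  have h1 : (univ.filter fun p : Fin n × Fin n => G.Adj p.1 p.2)
      = (univ.filter fun p : Fin n × Fin n => p.1 < p.2 ∧ G.Adj p.1 p.2)
        ∪ (univ.filter fun p : Fin n × Fin n => p.2 < p.1 ∧ G.Adj p.1 p.2) := by
    ext ⟨a, b⟩
    simp only [mem_filter, mem_union, mem_univ, true_and]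
    constructor
    · intro h
      rcases lt_or_gt_of_ne (G.ne_of_adj h) with hlt | hgt
      · exact Or.inl ⟨hlt, h⟩
      · exact Or.inr ⟨hgt, h⟩
    · rintro (⟨_, h⟩ | ⟨_, h⟩) <;> exact h
  have hdisj : Disjoint
      (univ.filter fun p : Fin n × Fin n => p.1 < p.2 ∧ G.Adj p.1 p.2)
      (univ.filter fun p : Fin n × Fin n => p.2 < p.1 ∧ G.Adj p.1 p.2) := by
    rw [Finset.disjoint_left]
    rintro ⟨a, b⟩ ha hb
    simp only [mem_filter] at ha hb
    exact absurd ha.2.1 (not_lt_of_gt hb.2.1)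
  have hswap : #(univ.filter fun p : Fin n × Fin n => p.2 < p.1 ∧ G.Adj p.1 p.2)
      = #(univ.filter fun p : Fin n × Fin n => p.1 < p.2 ∧ G.Adj p.1 p.2) := by
    refine Finset.card_bij' (fun p _ => p.swap) (fun p _ => p.swap) ?_ ?_ ?_ ?_
    · rintro ⟨a, b⟩ h
      simp only [mem_filter, mem_univ, true_and, Prod.swap] at h ⊢
      exact ⟨h.1, h.2.symm⟩
    · rintro ⟨a, b⟩ h
      simp only [mem_filter, mem_univ, true_and, Prod.swap] at h ⊢
      exact ⟨h.1, h.2.symm⟩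
    · rintro ⟨a, b⟩ _; rfl
    · rintro ⟨a, b⟩ _; rfl
  have hcard : (univ.filter fun p : Fin n × Fin n => G.Adj p.1 p.2).card
      = 2 * #(univ.filter fun p : Fin n × Fin n => p.1 < p.2 ∧ G.Adj p.1 p.2) := by
    rw [h1, Finset.card_union_of_disjoint hdisj, hswap]; ring
  have h2' : 2 * #G.edgeFinset
      = #(univ.filter fun p : Fin n × Fin n => G.Adj p.1 p.2) := by
    rw [h2]
  omega

/-- A clique in a perpendicularity graph gives an orthonormal family, so
the graph is `(d+2)`-clique free. -/
private lemma perpGraph_cliqueFree (y : Fin N → EuclideanSpace ℝ (Fin (d + 1)))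
    (hy : ∀ i, ‖y i‖ = 1) : (perpGraph y).CliqueFree (d + 2) := by
  intro t ht
  have horth : Orthonormal ℝ (fun i : (t : Finset (Fin N)) => y i) := by
    rw [orthonormal_iff_ite]
    intro i j
    by_cases hij : i = j
    · subst hij
      simp only [if_pos rfl]
      have := real_inner_self_eq_norm_mul_norm (y i)
      rw [hy i] at this
      simpa using this
    · rw [if_neg hij]
      have hne : (i : Fin N) ≠ (j : Fin N) := fun h => hij (Subtype.ext h)
      exact (ht.1 i.2 j.2 hne).2
  have hli := horth.linearIndependent
  have hcard := hli.fintype_card_le_finrank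
  rw [finrank_euclideanSpace_fin] at hcard
  rw [Fintype.card_coe, ht.2] at hcard
  omega

/-- Counting `k < m` congruent to `m` mod `r`. -/
private lemma count_mod_card (r m : ℕ) (hr : 0 < r) :
    #((range m).filter fun k => k % r = m % r) = m / r := by
  rw [← Finset.card_range (m / r)]
  refine Finset.card_bij' (fun k _ => k / r) (fun t _ => m % r + r * t) ?_ ?_ ?_ ?_
  · intro k hk
    simp only [mem_filter, mem_range] at hk ⊢
    obtain ⟨hklt, hkmod⟩ := hk
    have hle : k / r ≤ m / r := Nat.div_le_div_right (le_of_lt hklt)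
    rcases lt_or_eq_of_le hle with h | h
    · exact h
    · exfalso
      have h1 := Nat.div_add_mod k r
      have h2 := Nat.div_add_mod m r
      rw [h, hkmod] at h1
      omega
  · intro t ht
    simp only [mem_range] at ht
    simp only [mem_filter, mem_range]
    constructor
    · have h2 := Nat.div_add_mod m r
      have h3 : r * (t + 1) ≤ r * (m / r) := Nat.mul_le_mul_left r (by omega)
      rw [Nat.mul_succ] at h3
      omega
    · rw [Nat.add_mul_mod_self_left]
      exact Nat.mod_mod_of_dvd _ dvd_rfl
  · intro k hk
    simp only [mem_filter, mem_range] at hk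
    show m % r + r * (k / r) = k
    have h1 := Nat.div_add_mod k r
    rw [hk.2] at h1
    omega
  · intro t _
    show (m % r + r * t) / r = t
    rw [Nat.add_mul_div_left _ _ hr, Nat.div_eq_of_lt (Nat.mod_lt _ hr)]
    omega

private lemma count_nemod_card (r m : ℕ) (hr : 0 < r) :
    #((range m).filter fun k => k % r ≠ m % r) = m - m / r := by
  classical
  have h := Finset.card_filter_add_card_filter_not
    (s := range m) (p := fun k => k % r = m % r)
  rw [count_mod_card r m hr, Finset.card_range] at h
  have : #((range m).filter fun k => ¬ k % r = m % r)
      = #((range m).filter fun k => k % r ≠ m % r) := by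
    apply Finset.card_bij (fun a _ => a) <;> simp_all
  omega

/-- The master counting lemma for the Turán-type pair count. -/
private lemma main_count (r : ℕ) (hr : 0 < r) (n : ℕ) :
    #(univ.filter fun p : Fin n × Fin n => p.1 < p.2 ∧ (p.1 : ℕ) % r ≠ (p.2 : ℕ) % r)
      = ∑ m ∈ range n, (m - m / r) := by
  classical
  rw [Finset.card_eq_sum_card_fiberwise
    (f := Prod.snd) (t := univ) (fun x _ => mem_univ _)]
  rw [← Fin.sum_univ_eq_sum_range (fun m => m - m / r) n]
  refine Finset.sum_congr rfl fun j _ => ?_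
  rw [← count_nemod_card r j.1 hr]
  refine Finset.card_bij' (fun p _ => (p.1 : ℕ))
    (fun k hk => (⟨k, lt_trans (mem_range.1 (mem_filter.1 hk).1) j.isLt⟩, j)) ?_ ?_ ?_ ?_
  · rintro ⟨a, b⟩ h
    simp only [mem_filter, mem_univ, true_and, mem_range] at h ⊢
    obtain ⟨⟨hlt, hmod⟩, hsnd⟩ := h
    subst hsnd
    exact ⟨hlt, hmod⟩
  · intro k hk
    simp only [mem_filter, mem_range] at hk
    simp only [mem_filter, mem_univ, true_and]
    refine ⟨⟨hk.1, hk.2⟩, ?_⟩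
    simp
  · rintro ⟨a, b⟩ h
    simp only [mem_filter, mem_univ, true_and] at h
    obtain ⟨⟨hlt, hmod⟩, hsnd⟩ := h
    subst hsnd
    rfl
  · intro k hk; rfl

/-- The per-vertex ceiling identity. -/
private lemma ceil_eq (d m : ℕ) :
    ⌈(d : ℚ) / (d + 1) * m⌉ = (m : ℤ) - ((m / (d + 1) : ℕ) : ℤ) := by
  have hd : ((d : ℚ) + 1) ≠ 0 := by positivity
  have h1 : (d : ℚ) / (d + 1) * m = -((m : ℚ) / ((d + 1 : ℕ) : ℚ)) + ((m : ℤ) : ℚ) := by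
    push_cast
    field_simp
    ring
  rw [h1, Int.ceil_add_intCast, Int.ceil_neg, Rat.floor_natCast_div_natCast]
  omega

end Aux

theorem stmt13 (d N : ℕ) (x : Fin N → EuclideanSpace ℝ (Fin (d + 1)))
    (hx : ∀ i, ‖x i‖ = 1)
    (v : Fin (d + 1) → EuclideanSpace ℝ (Fin (d + 1))) (hv : Orthonormal ℝ v)
    (hcfg : ∀ (i : Fin N) (j : Fin (d + 1)), (i : ℕ) % (d + 1) = (j : ℕ) →
      x i = v j ∨ x i = -v j) :
    (perpPairs x : ℤ) = ∑ m ∈ Finset.range N, ⌈(d : ℚ) / (d + 1) * m⌉ ∧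
    ∀ y : Fin N → EuclideanSpace ℝ (Fin (d + 1)), (∀ i, ‖y i‖ = 1) →
      perpPairs y ≤ perpPairs x := by
  classical
  have hr : 0 < d + 1 := Nat.succ_pos d
  -- inner product characterization for the extremal configuration
  have hinner : ∀ i j : Fin N,
      (⟪x i, x j⟫ = 0 ↔ (i : ℕ) % (d + 1) ≠ (j : ℕ) % (d + 1)) := by
    intro i j
    set a : Fin (d + 1) := ⟨(i : ℕ) % (d + 1), Nat.mod_lt _ hr⟩ with ha
    set b : Fin (d + 1) := ⟨(j : ℕ) % (d + 1), Nat.mod_lt _ hr⟩ with hb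
    have hia := hcfg i a rfl
    have hjb := hcfg j b rfl
    have hvv := orthonormal_iff_ite.mp hv
    constructor
    · intro h0 heq
      have hab : a = b := Fin.ext heq
      rw [← hab] at hjb
      have h1 : ⟪v a, v a⟫ = (1 : ℝ) := by simpa using hvv a a
      rcases hia with h | h <;> rcases hjb with h' | h' <;>
        rw [h, h'] at h0 <;> simp [inner_neg_neg, inner_neg_right, h1, hv.ne_zero a] at h0
    · intro hne
      have hab : a ≠ b := fun hcon => hne (by
        have := congrArg Fin.val hcon
        simpa [ha, hb] using this)
      have h0 : ⟪v a, v b⟫ = (0 : ℝ) := by simpa [hab] using hvv a b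
      rcases hia with h | h <;> rcases hjb with h' | h' <;>
        rw [h, h'] <;> simp [inner_neg_neg, inner_neg_right, inner_neg_left, h0]
  -- perpPairs x as a concrete count
  have hxval : perpPairs x = ∑ m ∈ range N, (m - m / (d + 1)) := by
    unfold perpPairs
    have hset : {p : Fin N × Fin N | p.1 < p.2 ∧ ⟪x p.1, x p.2⟫ = 0}
        = ↑(univ.filter fun p : Fin N × Fin N =>
            p.1 < p.2 ∧ (p.1 : ℕ) % (d + 1) ≠ (p.2 : ℕ) % (d + 1)) := by
      ext p
      simp only [Set.mem_setOf_eq, Finset.coe_filter, mem_univ, true_and, Set.mem_setOf_eq]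
      rw [hinner p.1 p.2]
    rw [hset, Set.ncard_coe_finset, main_count _ hr]
  constructor
  · rw [hxval]
    rw [Nat.cast_sum]
    refine Finset.sum_congr rfl fun m _ => ?_
    rw [ceil_eq d m, Nat.cast_sub (Nat.div_le_self _ _)]
  · intro y hy
    -- the graphs
    have hyval : perpPairs y = #(perpGraph y).edgeFinset := by
      unfold perpPairs
      have hset : {p : Fin N × Fin N | p.1 < p.2 ∧ ⟪y p.1, y p.2⟫ = 0}
          = ↑(univ.filter fun p : Fin N × Fin N =>
              p.1 < p.2 ∧ (perpGraph y).Adj p.1 p.2) := by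
        ext p
        simp only [Set.mem_setOf_eq, Finset.coe_filter, mem_univ, true_and,
          Set.mem_setOf_eq, perpGraph_adj]
        constructor
        · rintro ⟨h1, h2⟩; exact ⟨h1, ne_of_lt h1, h2⟩
        · rintro ⟨h1, _, h2⟩; exact ⟨h1, h2⟩
      rw [hset, Set.ncard_coe_finset, card_lt_pairs]
    have hturan : perpPairs x = #(SimpleGraph.turanGraph N (d + 1)).edgeFinset := by
      rw [hxval, ← main_count (d + 1) hr N,
        ← card_lt_pairs (SimpleGraph.turanGraph N (d + 1))]
      congr 1
    rw [hyval, hturan]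
    exact (SimpleGraph.isTuranMaximal_turanGraph hr).2
      (perpGraph_cliqueFree y hy)
end

section
/- Let $\mu$ be a finitely supported probability measure on $S^d$ and define $E_\infty(\mu) = \frac{1}{2}\sum_{x, y \in \mathrm{spt}(\mu), \; x \cdot y = 0} \mu(\{x\})\mu(\{y\})$. Then $E_\infty(\mu) \le \frac{d}{2(d+1)}$, with equality if and only if there exists an orthonormal basis $v_1, \dots, v_{d+1}$ of $\mathbb{R}^{d+1}$ and weights $a_i, b_i \ge 0$ with $a_i + b_i = \frac{1}{d+1}$ such that $\mu = \sum_{i=1}^{d+1} (a_i \delta_{v_i} + b_i \delta_{-v_i})$. -/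
open scoped RealInnerProductSpace Classical

open Finset

namespace Stmt15

variable {α : Type*}

noncomputable def Qf (r : α → α → Prop) (V : Finset α) (f : α → ℝ) : ℝ :=
  ∑ x ∈ V, ∑ y ∈ V, if r x y then f x * f y else 0

noncomputable def Af (r : α → α → Prop) (V : Finset α) (f : α → ℝ) (a : α) : ℝ :=
  ∑ y ∈ V, if r a y then f y else 0

noncomputable def Bf (r : α → α → Prop) (V : Finset α) (f g : α → ℝ) : ℝ :=
  ∑ x ∈ V, ∑ y ∈ V, if r x y then f x * g y else 0

variable {r : α → α → Prop} {V : Finset α}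

theorem Qf_eq_Bf (f : α → ℝ) : Qf r V f = Bf r V f f := rfl

theorem Bf_add_left (f g h : α → ℝ) :
    Bf r V (fun x => f x + g x) h = Bf r V f h + Bf r V g h := by
  unfold Bf
  rw [← Finset.sum_add_distrib]
  refine Finset.sum_congr rfl fun x _ => ?_
  rw [← Finset.sum_add_distrib]
  refine Finset.sum_congr rfl fun y _ => ?_
  split_ifs <;> ring

theorem Bf_add_right (f g h : α → ℝ) :
    Bf r V f (fun x => g x + h x) = Bf r V f g + Bf r V f h := by
  unfold Bf
  rw [← Finset.sum_add_distrib]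
  refine Finset.sum_congr rfl fun x _ => ?_
  rw [← Finset.sum_add_distrib]
  refine Finset.sum_congr rfl fun y _ => ?_
  split_ifs <;> ring

theorem Bf_comm (hsym : ∀ x y, r x y → r y x) (f g : α → ℝ) :
    Bf r V f g = Bf r V g f := by
  unfold Bf
  rw [Finset.sum_comm]
  refine Finset.sum_congr rfl fun x _ => Finset.sum_congr rfl fun y _ => ?_
  have : r y x ↔ r x y := ⟨hsym y x, hsym x y⟩
  rw [if_congr this rfl rfl]
  split_ifs <;> ring

theorem Qf_add (hsym : ∀ x y, r x y → r y x) (f g : α → ℝ) :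
    Qf r V (fun x => f x + g x) = Qf r V f + 2 * Bf r V f g + Qf r V g := by
  rw [Qf_eq_Bf, Bf_add_left, Bf_add_right, Bf_add_right, Qf_eq_Bf, Qf_eq_Bf,
    Bf_comm hsym g f]
  ring

theorem Af_delta {b : α} (hb : b ∈ V) (t : ℝ) (a : α) :
    Af r V (fun x => if x = b then t else 0) a = if r a b then t else 0 := by
  unfold Af
  rw [show (∑ y ∈ V, if r a y then (if y = b then t else 0) else 0)
      = ∑ y ∈ V, if y = b then (if r a b then t else 0) else 0 from
    Finset.sum_congr rfl fun y _ => by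
      rcases eq_or_ne y b with rfl | h
      · simp
      · simp [h]]
  rw [Finset.sum_ite_eq' V b fun _ => if r a b then t else 0]
  simp [hb]

theorem Bf_delta_left {a : α} (ha : a ∈ V) (t : ℝ) (g : α → ℝ) :
    Bf r V (fun x => if x = a then t else 0) g = t * Af r V g a := by
  unfold Bf
  rw [show (∑ x ∈ V, ∑ y ∈ V, if r x y then (if x = a then t else 0) * g y else 0)
      = ∑ x ∈ V, if x = a then t * Af r V g a else 0 from
    Finset.sum_congr rfl fun x _ => by
      rcases eq_or_ne x a with rfl | h
      · simp only [if_pos rfl]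
        rw [Af, Finset.mul_sum]
        exact Finset.sum_congr rfl fun y _ => by split_ifs <;> ring
      · simp only [if_neg h]
        exact Finset.sum_eq_zero fun y _ => by split_ifs <;> ring]
  rw [Finset.sum_ite_eq' V a fun _ => t * Af r V g a]
  try simp [ha]

theorem Bf_delta_right (hsym : ∀ x y, r x y → r y x) {b : α} (hb : b ∈ V) (t : ℝ)
    (f : α → ℝ) : Bf r V f (fun x => if x = b then t else 0) = t * Af r V f b := by
  rw [Bf_comm hsym, Bf_delta_left hb]

theorem Qf_delta (hsym : ∀ x y, r x y → r y x) {a : α} (ha : a ∈ V) (hirr : ¬ r a a)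
    (t : ℝ) : Qf r V (fun x => if x = a then t else 0) = 0 := by
  rw [Qf_eq_Bf, Bf_delta_left ha, Af_delta ha]
  simp [hirr]

theorem Qf_sum_mul (f : α → ℝ) : Qf r V f = ∑ x ∈ V, f x * Af r V f x := by
  unfold Qf Af
  refine Finset.sum_congr rfl fun x _ => ?_
  rw [Finset.mul_sum]
  exact Finset.sum_congr rfl fun y _ => by split_ifs <;> ring

theorem Qf_subset {V' : Finset α} (hVV' : V ⊆ V') (f : α → ℝ)
    (h0 : ∀ x ∈ V', x ∉ V → f x = 0) : Qf r V f = Qf r V' f := by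
  unfold Qf
  rw [← Finset.sum_subset hVV' (fun x hx hxn => Finset.sum_eq_zero fun y _ => by
    simp [h0 x hx hxn])]
  exact Finset.sum_congr rfl fun x _ => Finset.sum_subset hVV' fun y hy hyn => by
    simp [h0 y hy hyn]

theorem Qf_add' (hsym : ∀ x y, r x y → r y x) (F f g : α → ℝ)
    (hF : ∀ x, F x = f x + g x) :
    Qf r V F = Qf r V f + 2 * Bf r V f g + Qf r V g := by
  have hFe : F = fun x => f x + g x := funext hF
  subst hFe
  exact Qf_add hsym f g

theorem Bf_add_right' (f G g h : α → ℝ) (hG : ∀ x, G x = g x + h x) :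
    Bf r V f G = Bf r V f g + Bf r V f h := by
  have hGe : G = fun x => g x + h x := funext hG
  subst hGe
  exact Bf_add_right f g h

theorem Qf_move (hsym : ∀ x y, r x y → r y x) {a b : α} (ha : a ∈ V) (hb : b ∈ V)
    (hnab : ¬ r a b) (hirra : ¬ r a a) (hirrb : ¬ r b b) (f : α → ℝ) (t : ℝ) :
    Qf r V (fun x => f x + ((if x = a then -t else 0) + (if x = b then t else 0)))
      = Qf r V f + 2 * t * (Af r V f b - Af r V f a) := by
  rw [Qf_add' hsym _ f (fun x => (if x = a then -t else 0) + (if x = b then t else 0))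
      (fun x => rfl)]
  rw [Qf_add' hsym _ (fun x => if x = a then -t else 0) (fun x => if x = b then t else 0)
      (fun x => rfl)]
  rw [Qf_delta hsym ha hirra, Qf_delta hsym hb hirrb]
  rw [Bf_add_right' f _ (fun x => if x = a then -t else 0) (fun x => if x = b then t else 0)
      (fun x => rfl)]
  rw [Bf_delta_right hsym ha, Bf_delta_right hsym hb]
  rw [Bf_delta_left ha, Af_delta hb]
  rw [if_neg hnab]
  ring

theorem Qf_move3 (hsym : ∀ x y, r x y → r y x) {a b c : α} (ha : a ∈ V) (hb : b ∈ V)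
    (hc : c ∈ V) (hrac : r a c) (hnab : ¬ r a b) (hncb : ¬ r c b)
    (hirra : ¬ r a a) (hirrb : ¬ r b b) (hirrc : ¬ r c c) (f : α → ℝ) (t : ℝ) :
    Qf r V (fun x => f x + ((if x = a then t else 0) +
        ((if x = c then t else 0) + (if x = b then -(2*t) else 0))))
      = Qf r V f + 2 * t * (Af r V f a + Af r V f c - 2 * Af r V f b) + 2 * t^2 := by
  rw [Qf_add' hsym _ f (fun x => (if x = a then t else 0) +
      ((if x = c then t else 0) + (if x = b then -(2*t) else 0))) (fun x => rfl)]
  rw [Qf_add' hsym _ (fun x => if x = a then t else 0)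
      (fun x => (if x = c then t else 0) + (if x = b then -(2*t) else 0)) (fun x => rfl)]
  rw [Qf_add' hsym _ (fun x => if x = c then t else 0)
      (fun x => if x = b then -(2*t) else 0) (fun x => rfl)]
  rw [Qf_delta hsym ha hirra, Qf_delta hsym hb hirrb, Qf_delta hsym hc hirrc]
  rw [Bf_add_right' f _ (fun x => if x = a then t else 0)
      (fun x => (if x = c then t else 0) + (if x = b then -(2*t) else 0)) (fun x => rfl)]
  rw [Bf_add_right' f _ (fun x => if x = c then t else 0)
      (fun x => if x = b then -(2*t) else 0) (fun x => rfl)]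
  rw [Bf_add_right' _ _ (fun x => if x = c then t else 0)
      (fun x => if x = b then -(2*t) else 0) (fun x => rfl)]
  rw [Bf_delta_right hsym ha, Bf_delta_right hsym hb, Bf_delta_right hsym hc,
      Bf_delta_right hsym hc, Bf_delta_right hsym hb]
  rw [Bf_delta_right hsym hb]
  rw [Af_delta ha, Af_delta ha, Af_delta hc]
  have hca : r c a := hsym a c hrac
  have hnba : ¬ r b a := fun h => hnab (hsym _ _ h)
  have hnbc : ¬ r b c := fun h => hncb (hsym _ _ h)
  rw [if_pos hca, if_neg hnba, if_neg hnbc]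
  ring


theorem MS_ineq (hsym : ∀ x y, r x y → r y x) (k : ℕ)
    (hirr : ∀ x ∈ V, ¬ r x x)
    (hcl : ∀ s : Finset α, s ⊆ V → (∀ x ∈ s, ∀ y ∈ s, x ≠ y → r x y) → s.card ≤ k)
    (f : α → ℝ) (hf0 : ∀ x ∈ V, 0 ≤ f x) (hf1 : ∑ x ∈ V, f x = 1) :
    Qf r V f ≤ 1 - 1/(k:ℝ) := by
  suffices H : ∀ n : ℕ, ∀ f : α → ℝ, (∀ x ∈ V, 0 ≤ f x) → (∑ x ∈ V, f x = 1) →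
      (V.filter fun x => f x ≠ 0).card ≤ n → Qf r V f ≤ 1 - 1/(k:ℝ) by
    exact H _ f hf0 hf1 le_rfl
  intro n
  induction n with
  | zero =>
    intro f hf0 hf1 hcard
    exfalso
    have : ∀ x ∈ V, f x = 0 := by
      intro x hx
      by_contra h
      have : x ∈ V.filter fun x => f x ≠ 0 := Finset.mem_filter.mpr ⟨hx, h⟩
      have := Finset.card_pos.mpr ⟨x, this⟩
      omega
    rw [Finset.sum_eq_zero this] at hf1
    norm_num at hf1
  | succ n IH =>
    intro f hf0 hf1 hcard
    set S := V.filter fun x => f x ≠ 0 with hS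
    have hSV : S ⊆ V := Finset.filter_subset _ _
    have hvanish : ∀ x ∈ V, x ∉ S → f x = 0 := by
      intro x hx hnx
      by_contra h
      exact hnx (Finset.mem_filter.mpr ⟨hx, h⟩)
    have hsumS : ∑ x ∈ S, f x = 1 := by
      rw [← hf1]
      exact Finset.sum_subset hSV hvanish
    have hSne : S.Nonempty := by
      rcases S.eq_empty_or_nonempty with h | h
      · rw [h, Finset.sum_empty] at hsumS; norm_num at hsumS
      · exact h
    by_cases hcliq : ∀ x ∈ S, ∀ y ∈ S, x ≠ y → r x y
    · -- clique case
      have hQ : Qf r V f = Qf r S f := (Qf_subset hSV f hvanish).symm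
      have hQS : Qf r S f = 1 - ∑ x ∈ S, f x * f x := by
        unfold Qf
        have : ∀ x ∈ S, (∑ y ∈ S, if r x y then f x * f y else 0)
            = (∑ y ∈ S, f x * f y) - f x * f x := by
          intro x hx
          have : ∀ y ∈ S, (if r x y then f x * f y else 0)
              = f x * f y - (if x = y then f x * f y else 0) := by
            intro y hy
            rcases eq_or_ne x y with rfl | hne
            · rw [if_neg (hirr x (hSV hx)), if_pos rfl]; ring
            · rw [if_pos (hcliq x hx y hy hne), if_neg hne]; ring
          rw [Finset.sum_congr rfl this, Finset.sum_sub_distrib,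
            Finset.sum_ite_eq S x fun y => f x * f y, if_pos hx]
        rw [Finset.sum_congr rfl this, Finset.sum_sub_distrib, ← Finset.sum_mul_sum,
          hsumS]
        norm_num
      have hkpos : 0 < k := by
        have h1 := hcl S hSV hcliq
        have h2 := Finset.card_pos.mpr hSne
        omega
      have hcardk : S.card ≤ k := hcl S hSV hcliq
      have hcs : (1:ℝ)/(k:ℝ) ≤ ∑ x ∈ S, f x * f x := by
        have h1 : ((∑ x ∈ S, f x))^2 ≤ (S.card : ℝ) * ∑ x ∈ S, (f x)^2 :=
          sq_sum_le_card_mul_sum_sq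
        rw [hsumS, one_pow] at h1
        have hc0 : (0:ℝ) < S.card := by
          exact_mod_cast Finset.card_pos.mpr hSne
        have h2 : (1:ℝ)/(S.card:ℝ) ≤ ∑ x ∈ S, (f x)^2 := by
          rw [div_le_iff₀ hc0] at *
          calc (1:ℝ) ≤ (S.card : ℝ) * ∑ x ∈ S, (f x)^2 := h1
          _ = (∑ x ∈ S, (f x)^2) * S.card := by ring
        have h3 : (1:ℝ)/(k:ℝ) ≤ 1/(S.card:ℝ) := by
          apply one_div_le_one_div_of_le hc0
          exact_mod_cast hcardk
        calc (1:ℝ)/(k:ℝ) ≤ 1/(S.card:ℝ) := h3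
        _ ≤ ∑ x ∈ S, (f x)^2 := h2
        _ = ∑ x ∈ S, f x * f x := Finset.sum_congr rfl fun x _ => sq (f x) ▸ by ring
      rw [hQ, hQS]
      linarith
    · -- non-clique case
      push_neg at hcliq
      obtain ⟨a, haS, b, hbS, hab, hnr⟩ := hcliq
      have main : ∀ a b : α, a ∈ S → b ∈ S → a ≠ b → ¬ r a b →
          Af r V f a ≤ Af r V f b → Qf r V f ≤ 1 - 1/(k:ℝ) := by
        intro a b haS hbS hab hnr hAle
        have haV : a ∈ V := hSV haS
        have hbV : b ∈ V := hSV hbS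
        have hfa : f a ≠ 0 := (Finset.mem_filter.mp haS).2
        have hfb : f b ≠ 0 := (Finset.mem_filter.mp hbS).2
        have hfa0 : 0 < f a := lt_of_le_of_ne (hf0 a haV) (Ne.symm hfa)
        set g : α → ℝ := fun x =>
          f x + ((if x = a then -(f a) else 0) + (if x = b then f a else 0)) with hg
        have hg0 : ∀ x ∈ V, 0 ≤ g x := by
          intro x hx
          have h1 := hf0 x hx
          simp only [hg]
          split_ifs with h2 h3 h3 <;> first | (subst h2; linarith) | linarith
        have hg1 : ∑ x ∈ V, g x = 1 := by
          simp only [hg]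
          rw [Finset.sum_add_distrib, Finset.sum_add_distrib, hf1,
            Finset.sum_ite_eq' V a fun _ => -(f a), Finset.sum_ite_eq' V b fun _ => f a,
            if_pos haV, if_pos hbV]
          ring
        have hgcard : (V.filter fun x => g x ≠ 0).card ≤ n := by
          have hsub : (V.filter fun x => g x ≠ 0) ⊆ S.erase a := by
            intro x hx
            obtain ⟨hxV, hgx⟩ := Finset.mem_filter.mp hx
            rcases eq_or_ne x a with rfl | hxa
            · exfalso; apply hgx; simp only [hg]; simp [hab]
            · refine Finset.mem_erase.mpr ⟨hxa, ?_⟩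
              rcases eq_or_ne x b with rfl | hxb
              · exact hbS
              · refine Finset.mem_filter.mpr ⟨hxV, ?_⟩
                intro h0
                apply hgx
                simp only [hg]
                simp [hxa, hxb, h0]
          have h1 := Finset.card_le_card hsub
          have h2 : (S.erase a).card = S.card - 1 := Finset.card_erase_of_mem haS
          have h3 : 0 < S.card := Finset.card_pos.mpr ⟨a, haS⟩
          omega
        have hQg := IH g hg0 hg1 hgcard
        have hmove := Qf_move hsym haV hbV hnr (hirr a haV) (hirr b hbV) f (f a)
        have : Qf r V g = Qf r V f + 2 * f a * (Af r V f b - Af r V f a) := hmove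
        nlinarith [hQg, this, hfa0, sub_nonneg.mpr hAle]
      rcases le_total (Af r V f a) (Af r V f b) with hle | hle
      · exact main a b haS hbS hab hnr hle
      · exact main b a hbS haS hab.symm (fun h => hnr (hsym b a h)) hle


theorem MS_eq_A (hsym : ∀ x y, r x y → r y x) (k : ℕ)
    (hirr : ∀ x ∈ V, ¬ r x x)
    (hcl : ∀ s : Finset α, s ⊆ V → (∀ x ∈ s, ∀ y ∈ s, x ≠ y → r x y) → s.card ≤ k)
    (f : α → ℝ) (hfpos : ∀ x ∈ V, 0 < f x) (hf1 : ∑ x ∈ V, f x = 1)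
    (hQ : Qf r V f = 1 - 1/(k:ℝ)) {a b : α} (ha : a ∈ V) (hb : b ∈ V)
    (hab : a ≠ b) (hnr : ¬ r a b) : Af r V f a = Af r V f b := by
  have key : ∀ a b : α, a ∈ V → b ∈ V → a ≠ b → ¬ r a b →
      ¬ (Af r V f a < Af r V f b) := by
    intro a b ha hb hab hnr hlt
    set g : α → ℝ := fun x =>
      f x + ((if x = a then -(f a) else 0) + (if x = b then f a else 0)) with hg
    have hg0 : ∀ x ∈ V, 0 ≤ g x := by
      intro x hx
      have h1 := (hfpos x hx).le
      have h2 := (hfpos a ha).le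
      simp only [hg]
      split_ifs with h3 h4 h4 <;> first | (subst h3; linarith) | linarith
    have hg1 : ∑ x ∈ V, g x = 1 := by
      simp only [hg]
      rw [Finset.sum_add_distrib, Finset.sum_add_distrib, hf1,
        Finset.sum_ite_eq' V a fun _ => -(f a), Finset.sum_ite_eq' V b fun _ => f a,
        if_pos ha, if_pos hb]
      ring
    have hineq := MS_ineq hsym k hirr hcl g hg0 hg1
    have hmove : Qf r V g = Qf r V f + 2 * (f a) * (Af r V f b - Af r V f a) :=
      Qf_move hsym ha hb hnr (hirr a ha) (hirr b hb) f (f a)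
    nlinarith [mul_pos (hfpos a ha) (sub_pos.mpr hlt)]
  exact le_antisymm (not_lt.mp (key b a hb ha hab.symm (fun h => hnr (hsym b a h))))
    (not_lt.mp (key a b ha hb hab hnr))

theorem MS_eq_trans (hsym : ∀ x y, r x y → r y x) (k : ℕ)
    (hirr : ∀ x ∈ V, ¬ r x x)
    (hcl : ∀ s : Finset α, s ⊆ V → (∀ x ∈ s, ∀ y ∈ s, x ≠ y → r x y) → s.card ≤ k)
    (f : α → ℝ) (hfpos : ∀ x ∈ V, 0 < f x) (hf1 : ∑ x ∈ V, f x = 1)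
    (hQ : Qf r V f = 1 - 1/(k:ℝ)) {a b c : α} (ha : a ∈ V) (hb : b ∈ V) (hc : c ∈ V)
    (hab : a ≠ b) (hbc : b ≠ c) (hac : a ≠ c)
    (hnab : ¬ r a b) (hncb : ¬ r c b) (hrac : r a c) : False := by
  have hA1 : Af r V f a = Af r V f b :=
    MS_eq_A hsym k hirr hcl f hfpos hf1 hQ ha hb hab hnab
  have hA2 : Af r V f c = Af r V f b :=
    MS_eq_A hsym k hirr hcl f hfpos hf1 hQ hc hb hbc.symm hncb
  have htpos : 0 < f b / 2 := half_pos (hfpos b hb)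
  set t : ℝ := f b / 2 with htdef
  set g : α → ℝ := fun x => f x + ((if x = a then t else 0) +
      ((if x = c then t else 0) + (if x = b then -(2*t) else 0))) with hg
  have hg0 : ∀ x ∈ V, 0 ≤ g x := by
    intro x hx
    have h1 := (hfpos x hx).le
    simp only [hg]
    split_ifs <;> subst_vars <;> first | linarith | simp_all
  have hg1 : ∑ x ∈ V, g x = 1 := by
    simp only [hg]
    rw [Finset.sum_add_distrib, Finset.sum_add_distrib, Finset.sum_add_distrib, hf1,
      Finset.sum_ite_eq' V a fun _ => t, Finset.sum_ite_eq' V c fun _ => t,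
      Finset.sum_ite_eq' V b fun _ => -(2*t),
      if_pos ha, if_pos hb, if_pos hc]
    ring
  have hineq := MS_ineq hsym k hirr hcl g hg0 hg1
  have hmove : Qf r V g = Qf r V f + 2 * t * (Af r V f a + Af r V f c
      - 2 * Af r V f b) + 2 * t^2 :=
    Qf_move3 hsym ha hb hc hrac hnab hncb (hirr a ha) (hirr b hb) (hirr c hc) f t
  nlinarith [mul_pos htpos htpos]


theorem MS_eq_main (hsym : ∀ x y, r x y → r y x) (k : ℕ)
    (hirr : ∀ x ∈ V, ¬ r x x)
    (hcl : ∀ s : Finset α, s ⊆ V → (∀ x ∈ s, ∀ y ∈ s, x ≠ y → r x y) → s.card ≤ k)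
    (f : α → ℝ) (hfpos : ∀ x ∈ V, 0 < f x) (hf1 : ∑ x ∈ V, f x = 1)
    (hQ : Qf r V f = 1 - 1/(k:ℝ)) :
    ∃ T : Finset α, T ⊆ V ∧ T.card = k ∧
      (∀ x ∈ T, ∀ y ∈ T, x ≠ y → r x y) ∧
      (∀ x ∈ V, ∃ t ∈ T, (x = t ∨ ¬ r t x) ∧ ∀ t' ∈ T, t' ≠ t → r x t') ∧
      (∀ t ∈ T, (∑ y ∈ V, if y = t ∨ ¬ r t y then f y else 0) = 1/(k:ℝ)) := by
  obtain ⟨T, hTmem, hTmax⟩ := Finset.exists_max_image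
    (V.powerset.filter fun s => ∀ x ∈ s, ∀ y ∈ s, x ≠ y → r x y) Finset.card
    ⟨∅, by simp⟩
  have hTmem' := hTmem
  simp only [Finset.mem_filter, Finset.mem_powerset] at hTmem'
  obtain ⟨hTV, hTcl⟩ := hTmem'
  -- basic coverage
  have hcov : ∀ x ∈ V, ∃ t ∈ T, x = t ∨ ¬ r t x := by
    intro x hx
    by_contra hcon
    push_neg at hcon
    have hxT : x ∉ T := fun hxT => (hcon x hxT).1 rfl
    have hins : insert x T ∈ V.powerset.filter
        fun s => ∀ x ∈ s, ∀ y ∈ s, x ≠ y → r x y := by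
      simp only [Finset.mem_filter, Finset.mem_powerset]
      refine ⟨Finset.insert_subset hx hTV, ?_⟩
      intro u hu v hv huv
      rcases Finset.mem_insert.mp hu with rfl | huT
      · rcases Finset.mem_insert.mp hv with rfl | hvT
        · exact absurd rfl huv
        · exact hsym v u (hcon v hvT).2
      · rcases Finset.mem_insert.mp hv with rfl | hvT
        · exact (hcon u huT).2
        · exact hTcl u huT v hvT huv
    have := hTmax _ hins
    rw [Finset.card_insert_of_notMem hxT] at this
    omega
  -- strengthened coverage
  have hcov2 : ∀ x ∈ V, ∃ t ∈ T, (x = t ∨ ¬ r t x) ∧ ∀ t' ∈ T, t' ≠ t → r x t' := by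
    intro x hx
    obtain ⟨t, htT, hxt⟩ := hcov x hx
    refine ⟨t, htT, hxt, ?_⟩
    intro t' ht'T ht't
    rcases eq_or_ne x t with rfl | hxt_ne
    · exact hTcl x htT t' ht'T (Ne.symm ht't)
    · have hnrtx : ¬ r t x := hxt.resolve_left hxt_ne
      have hxne' : x ≠ t' := by
        rintro rfl
        exact hnrtx (hsym x t (hTcl x ht'T t htT hxt_ne))
      by_contra hnrxt'
      exact MS_eq_trans hsym k hirr hcl f hfpos hf1 hQ (hTV htT) hx (hTV ht'T)
        (Ne.symm hxt_ne) hxne' (Ne.symm ht't) hnrtx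
        (fun h => hnrxt' (hsym t' x h)) (hTcl t htT t' ht'T (Ne.symm ht't))
  -- classes
  set Cl : α → Finset α := fun t => V.filter (fun y => y = t ∨ ¬ r t y) with hCl
  have hdisj : (↑T : Set α).PairwiseDisjoint Cl := by
    intro t htT t' ht'T htt'
    refine Finset.disjoint_left.mpr fun {y} hy1 hy2 => ?_
    obtain ⟨hyV, hyt⟩ := Finset.mem_filter.mp hy1
    obtain ⟨_, hyt'⟩ := Finset.mem_filter.mp hy2
    have hrtt' : r t t' := hTcl t htT t' ht'T htt'
    rcases eq_or_ne y t with rfl | hyt_ne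
    · rcases hyt' with h | h
      · exact htt' h
      · exact h (hsym _ _ hrtt')
    rcases eq_or_ne y t' with rfl | hyt'_ne
    · rcases hyt with h | h
      · exact htt' h.symm
      · exact h hrtt'
    have hnrty : ¬ r t y := hyt.resolve_left hyt_ne
    have hnrt'y : ¬ r t' y := hyt'.resolve_left hyt'_ne
    exact MS_eq_trans hsym k hirr hcl f hfpos hf1 hQ (hTV htT) hyV (hTV ht'T)
      (Ne.symm hyt_ne) hyt'_ne htt' hnrty hnrt'y hrtt'
  have hUnion : T.biUnion Cl = V := by
    apply Finset.Subset.antisymm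
    · exact Finset.biUnion_subset.mpr fun t _ => Finset.filter_subset _ _
    · intro x hx
      obtain ⟨t, htT, hxt⟩ := hcov x hx
      exact Finset.mem_biUnion.mpr ⟨t, htT, Finset.mem_filter.mpr ⟨hx, hxt⟩⟩
  set N : α → ℝ := fun x => ∑ y ∈ V, if y = x ∨ ¬ r x y then f y else 0 with hN
  have hClsum : ∀ t : α, ∑ y ∈ Cl t, f y = N t := by
    intro t
    rw [hCl, hN, Finset.sum_filter]
  have hsumN : ∑ t ∈ T, N t = 1 := by
    rw [← hf1, ← hUnion, Finset.sum_biUnion hdisj]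
    exact Finset.sum_congr rfl fun t _ => (hClsum t).symm
  -- N is constant on classes
  have heetrans : ∀ x ∈ V, ∀ y ∈ V, ∀ z ∈ V, (x = y ∨ ¬ r x y) → (y = z ∨ ¬ r y z) →
      (x = z ∨ ¬ r x z) := by
    intro x hx y hy z hz hxy hyz
    rcases eq_or_ne x y with rfl | hxy'
    · exact hyz
    rcases eq_or_ne y z with rfl | hyz'
    · exact hxy
    rcases eq_or_ne x z with rfl | hxz
    · exact Or.inl rfl
    have hnxy : ¬ r x y := hxy.resolve_left hxy'
    have hnyz : ¬ r y z := hyz.resolve_left hyz'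
    exact Or.inr fun hrxz => MS_eq_trans hsym k hirr hcl f hfpos hf1 hQ hx hy hz
      hxy' hyz' hxz hnxy (fun h => hnyz (hsym z y h)) hrxz
  have heesymm : ∀ x ∈ V, ∀ y ∈ V, (x = y ∨ ¬ r x y) → (y = x ∨ ¬ r y x) := by
    intro x _ y _ h
    rcases h with rfl | h
    · exact Or.inl rfl
    · exact Or.inr fun h' => h (hsym y x h')
  have hNconst : ∀ t ∈ V, ∀ x ∈ Cl t, N x = N t := by
    intro t htV x hxCl
    obtain ⟨hxV, hxt⟩ := Finset.mem_filter.mp hxCl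
    have htx : t = x ∨ ¬ r t x := by
      rcases hxt with rfl | h
      · exact Or.inl rfl
      · exact Or.inr h
    rw [hN]
    refine Finset.sum_congr rfl fun y hy => ?_
    have hiff : (y = x ∨ ¬ r x y) ↔ (y = t ∨ ¬ r t y) := by
      constructor
      · intro h
        have hxy : x = y ∨ ¬ r x y := h.imp_left Eq.symm
        have := heetrans t htV x hxV y hy htx hxy
        exact this.imp_left Eq.symm
      · intro h
        have hty : t = y ∨ ¬ r t y := h.imp_left Eq.symm
        have hxt : x = t ∨ ¬ r x t := heesymm t htV x hxV htx
        have := heetrans x hxV t htV y hy hxt hty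
        exact this.imp_left Eq.symm
    rw [if_congr hiff rfl rfl]
  -- Af + N = 1
  have hAN : ∀ x ∈ V, Af r V f x + N x = 1 := by
    intro x hx
    rw [Af, hN, ← Finset.sum_add_distrib, ← hf1]
    refine Finset.sum_congr rfl fun y hy => ?_
    split_ifs with h1 h2 h2
    · exfalso
      rcases h2 with rfl | h2
      · exact hirr _ hy h1
      · exact h2 h1
    · exact add_zero _
    · exact zero_add _
    · exact absurd (Or.inr h1) h2
  -- sum of f x * N x
  have h8 : ∑ x ∈ V, f x * N x = 1/(k:ℝ) := by
    have hQs : Qf r V f = ∑ x ∈ V, f x * Af r V f x := Qf_sum_mul f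
    have h81 : ∑ x ∈ V, f x * Af r V f x = 1 - ∑ x ∈ V, f x * N x := by
      have : ∀ x ∈ V, f x * Af r V f x = f x - f x * N x := by
        intro x hx
        have hA : Af r V f x = 1 - N x := by linarith [hAN x hx]
        rw [hA]; ring
      rw [Finset.sum_congr rfl this, Finset.sum_sub_distrib, hf1]
    rw [hQs, h81] at hQ
    linarith
  have h9 : ∑ t ∈ T, (N t)^2 = 1/(k:ℝ) := by
    rw [← h8, ← hUnion, Finset.sum_biUnion hdisj]
    refine Finset.sum_congr rfl fun t htT => ?_
    have : ∀ x ∈ Cl t, f x * N x = f x * N t := by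
      intro x hxCl
      rw [hNconst t (hTV htT) x hxCl]
    rw [Finset.sum_congr rfl this, ← Finset.sum_mul, hClsum t]
    ring
  -- counting
  have hTne : T.Nonempty := by
    rcases T.eq_empty_or_nonempty with h | h
    · rw [h, Finset.sum_empty] at hsumN; norm_num at hsumN
    · exact h
  have hple : T.card ≤ k := hcl T hTV hTcl
  have hppos : (0:ℝ) < (T.card:ℝ) := by exact_mod_cast Finset.card_pos.mpr hTne
  have hkpos : (0:ℝ) < (k:ℝ) := by
    have : 0 < k := lt_of_lt_of_le (Finset.card_pos.mpr hTne) hple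
    exact_mod_cast this
  have hid : ∑ t ∈ T, (N t - 1/(T.card:ℝ))^2 = 1/(k:ℝ) - 1/(T.card:ℝ) := by
    have expand : ∀ t ∈ T, (N t - 1/(T.card:ℝ))^2
        = (N t)^2 - 2*(1/(T.card:ℝ)) * N t + (1/(T.card:ℝ))^2 := by
      intro t _; ring
    rw [Finset.sum_congr rfl expand, Finset.sum_add_distrib, Finset.sum_sub_distrib,
      h9, ← Finset.mul_sum, hsumN, Finset.sum_const, nsmul_eq_mul]
    field_simp
    ring
  have hsq0 : 0 ≤ ∑ t ∈ T, (N t - 1/(T.card:ℝ))^2 :=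
    Finset.sum_nonneg fun t _ => sq_nonneg _
  have h1p : 1/(T.card:ℝ) ≤ 1/(k:ℝ) := by linarith
  have hcardeq : T.card = k := by
    have h' : (k:ℝ) ≤ (T.card:ℝ) := by
      rw [div_le_div_iff₀ hppos hkpos] at h1p
      linarith
    have : k ≤ T.card := by exact_mod_cast h'
    omega
  refine ⟨T, hTV, hcardeq, hTcl, hcov2, ?_⟩
  intro t htT
  have hzero : ∑ t ∈ T, (N t - 1/(T.card:ℝ))^2 = 0 := by
    rw [hid, hcardeq]
    ring
  have hterm := (Finset.sum_eq_zero_iff_of_nonneg fun t _ => sq_nonneg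
    (N t - 1/(T.card:ℝ))).mp hzero t htT
  have h2 : N t - 1/(T.card:ℝ) = 0 :=
    pow_eq_zero_iff (n := 2) (by norm_num) |>.mp hterm
  have hNt : N t = 1/(k:ℝ) := by
    rw [hcardeq] at h2
    linarith
  exact hNt


section Geom

variable {d : ℕ}

local notation "E" => EuclideanSpace ℝ (Fin (d+1))

theorem ortho_finset (s : Finset E)
    (hnorm : ∀ x ∈ s, ‖x‖ = 1)
    (horth : ∀ x ∈ s, ∀ y ∈ s, x ≠ y → ⟪x, y⟫ = 0) :
    Orthonormal ℝ (Subtype.val : (↑s : Set E) → E) := by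
  rw [orthonormal_subtype_iff_ite]
  intro v hv w hw
  rcases eq_or_ne v w with rfl | hne
  · rw [if_pos rfl, real_inner_self_eq_norm_sq, hnorm v hv]
    norm_num
  · rw [if_neg hne]
    exact horth v hv w hw hne

theorem clique_bound (s : Finset E)
    (hnorm : ∀ x ∈ s, ‖x‖ = 1)
    (horth : ∀ x ∈ s, ∀ y ∈ s, x ≠ y → ⟪x, y⟫ = 0) :
    s.card ≤ d + 1 := by
  have ho := ortho_finset s hnorm horth
  have hli : LinearIndependent ℝ (fun x => x : s → E) := ho.linearIndependent
  have h := hli.finset_card_le_finrank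
  rwa [finrank_euclideanSpace_fin] at h

theorem mem_pm (T : Finset E) (hcard : T.card = d + 1)
    (hnorm : ∀ x ∈ T, ‖x‖ = 1)
    (horth : ∀ x ∈ T, ∀ y ∈ T, x ≠ y → ⟪x, y⟫ = 0)
    (x : E) (hx : ‖x‖ = 1) (t : E) (ht : t ∈ T)
    (hxo : ∀ t' ∈ T, t' ≠ t → ⟪x, t'⟫ = 0) : x = t ∨ x = -t := by
  have ho := ortho_finset T hnorm horth
  have hli := ho.linearIndependent
  have hspan : Submodule.span ℝ (↑T : Set E) = ⊤ := by
    have h := hli.span_eq_top_of_card_eq_finrank'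
      (by rw [finrank_euclideanSpace_fin]; exact (Fintype.card_coe T).trans hcard)
    rwa [Subtype.range_coe] at h
  set c : ℝ := ⟪t, x⟫ with hc
  set yv : E := x - c • t with hyv
  have hyT : ∀ z ∈ (↑T : Set E), ⟪z, yv⟫ = 0 := by
    intro z hz
    have hzT : z ∈ T := hz
    rw [hyv, inner_sub_right, real_inner_smul_right]
    rcases eq_or_ne z t with rfl | hzt
    · rw [real_inner_self_eq_norm_sq, hnorm z hzT, hc]
      ring
    · rw [horth z hzT t ht hzt, real_inner_comm x z, hxo z hzT hzt]
      ring
  have hyall : ∀ z : E, ⟪z, yv⟫ = 0 := by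
    intro z
    have hz : z ∈ Submodule.span ℝ (↑T : Set E) := by rw [hspan]; trivial
    refine Submodule.span_induction (fun w hw => hyT w hw) ?_ ?_ ?_ hz
    · exact inner_zero_left _
    · intro u v _ _ hu hv
      rw [inner_add_left, hu, hv, add_zero]
    · intro a u _ hu
      rw [real_inner_smul_left, hu, mul_zero]
  have hy0 : yv = 0 := inner_self_eq_zero.mp (hyall yv)
  have hxct : x = c • t := by
    have := sub_eq_zero.mp (hyv ▸ hy0)
    exact this
  have htn : ‖t‖ = 1 := hnorm t ht
  have habs : |c| = 1 := by
    have h1 : ‖x‖ = ‖c • t‖ := by rw [← hxct]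
    rw [hx, norm_smul, htn, Real.norm_eq_abs, mul_one] at h1
    exact h1.symm
  rcases abs_eq (by norm_num : (0:ℝ) ≤ 1) |>.mp habs with h | h
  · left; rw [hxct, h, one_smul]
  · right; rw [hxct, h, neg_one_smul]

end Geom


end Stmt15

open Stmt15

theorem stmt15 (d : ℕ) (w : EuclideanSpace ℝ (Fin (d + 1)) →₀ ℝ)
    (hsph : ∀ x ∈ w.support, ‖x‖ = 1)
    (hpos : ∀ x, 0 ≤ w x)
    (hprob : ∑ x ∈ w.support, w x = 1) :
    (1 / 2 * ∑ x ∈ w.support, ∑ y ∈ w.support,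
        if ⟪x, y⟫ = 0 then w x * w y else 0) ≤ (d : ℝ) / (2 * (d + 1)) ∧
    ((1 / 2 * ∑ x ∈ w.support, ∑ y ∈ w.support,
        if ⟪x, y⟫ = 0 then w x * w y else 0) = (d : ℝ) / (2 * (d + 1)) ↔
      ∃ (v : Fin (d + 1) → EuclideanSpace ℝ (Fin (d + 1))) (a b : Fin (d + 1) → ℝ),
        Orthonormal ℝ v ∧
        (∀ i, 0 ≤ a i) ∧ (∀ i, 0 ≤ b i) ∧ (∀ i, a i + b i = 1 / (d + 1)) ∧
        w = ∑ i, (Finsupp.single (v i) (a i) + Finsupp.single (-v i) (b i))) := by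
  set r : EuclideanSpace ℝ (Fin (d + 1)) → EuclideanSpace ℝ (Fin (d + 1)) → Prop :=
    fun x y => ⟪x, y⟫ = 0 with hr
  have hQrw : (∑ x ∈ w.support, ∑ y ∈ w.support,
      if ⟪x, y⟫ = 0 then w x * w y else 0) = Qf r w.support w := rfl
  have hsym : ∀ x y, r x y → r y x := by
    intro x y h
    show (⟪y, x⟫ : ℝ) = 0
    rw [real_inner_comm]
    exact h
  have hirr : ∀ x ∈ w.support, ¬ r x x := by
    intro x hx h
    have h' : (⟪x, x⟫ : ℝ) = 0 := h
    rw [real_inner_self_eq_norm_sq, hsph x hx] at h'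
    norm_num at h'
  have hcl : ∀ s : Finset (EuclideanSpace ℝ (Fin (d + 1))), s ⊆ w.support →
      (∀ x ∈ s, ∀ y ∈ s, x ≠ y → r x y) → s.card ≤ d + 1 := by
    intro s hs hcliq
    exact clique_bound s (fun x hx => hsph x (hs hx)) hcliq
  have hf0 : ∀ x ∈ w.support, 0 ≤ w x := fun x _ => hpos x
  have hd1 : (0:ℝ) < (d:ℝ) + 1 := by positivity
  have hkcast : ((d + 1 : ℕ) : ℝ) = (d:ℝ) + 1 := by push_cast; ring
  have hbound : (d:ℝ) / (2 * ((d:ℝ) + 1)) = 1/2 * (1 - 1/((d:ℝ)+1)) := by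
    field_simp
    ring
  have hineq : Qf r w.support w ≤ 1 - 1/((d:ℝ)+1) := by
    have := MS_ineq hsym (d+1) hirr hcl w hf0 hprob
    rwa [hkcast] at this
  constructor
  · rw [hQrw, hbound]
    linarith
  rw [hQrw, hbound]
  constructor
  · -- equality implies structure
    intro heq
    have hQ : Qf r w.support w = 1 - 1/(((d+1:ℕ)):ℝ) := by
      rw [hkcast]; linarith
    have hfpos : ∀ x ∈ w.support, 0 < w x := fun x hx =>
      lt_of_le_of_ne (hpos x) (Ne.symm (Finsupp.mem_support_iff.mp hx))
    obtain ⟨T, hTV, hTcard, hTcl, hcov2, hmass⟩ :=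
      MS_eq_main hsym (d+1) hirr hcl w hfpos hprob hQ
    have hTnorm : ∀ x ∈ T, ‖x‖ = 1 := fun x hx => hsph x (hTV hx)
    have hTinner : ∀ t ∈ T, (⟪t, t⟫ : ℝ) = 1 := by
      intro t ht
      rw [real_inner_self_eq_norm_sq, hTnorm t ht]
      norm_num
    have htneT : ∀ t ∈ T, t ≠ -t := by
      intro t ht h
      have h2 : (⟪t, t⟫ : ℝ) = -1 := by
        nth_rewrite 2 [h]
        rw [inner_neg_right, hTinner t ht]
      rw [hTinner t ht] at h2
      norm_num at h2
    have hpm' : ∀ x ∈ w.support, ∀ t ∈ T, (∀ t' ∈ T, t' ≠ t → r x t') →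
        x = t ∨ x = -t := by
      intro x hx t ht hxo
      exact mem_pm T hTcard hTnorm hTcl x (hsph x hx) t ht hxo
    have hclassmass : ∀ t ∈ T, w t + w (-t) = 1/((d:ℝ)+1) := by
      intro t htT
      have h1 := hmass t htT
      rw [hkcast] at h1
      rw [← h1]
      have hcond : ∀ y ∈ w.support, ((y = t ∨ ¬ r t y) ↔ (y = t ∨ y = -t)) := by
        intro y hy
        constructor
        · rintro (rfl | hnr)
          · exact Or.inl rfl
          · obtain ⟨t₀, ht₀T, hyt₀, hyorth⟩ := hcov2 y hy
            have ht₀t : t₀ = t := by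
              by_contra hne
              have hryt : r y t := hyorth t htT (fun hh => hne hh.symm)
              exact hnr (hsym y t hryt)
            subst ht₀t
            exact hpm' y hy t₀ ht₀T hyorth
        · rintro (rfl | rfl)
          · exact Or.inl rfl
          · refine Or.inr fun hc => ?_
            have hc' : (⟪t, -t⟫ : ℝ) = 0 := hc
            rw [inner_neg_right, hTinner t htT] at hc'
            norm_num at hc'
      have hstep : (∑ y ∈ w.support, if y = t ∨ ¬ r t y then w y else 0)
          = ∑ y ∈ w.support, ((if y = t then w y else 0) + (if y = -t then w y else 0)) := by
        refine Finset.sum_congr rfl fun y hy => ?_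
        rw [if_congr (hcond y hy) rfl rfl]
        by_cases h1 : y = t
        · by_cases h2 : y = -t
          · exact absurd (h1 ▸ h2) (htneT t htT)
          · rw [if_pos (Or.inl h1), if_pos h1, if_neg h2, add_zero]
        · by_cases h2 : y = -t
          · rw [if_pos (Or.inr h2), if_neg h1, if_pos h2, zero_add]
          · rw [if_neg (not_or.mpr ⟨h1, h2⟩), if_neg h1, if_neg h2, add_zero]
      convert_to w t + w (-t) = ∑ y ∈ w.support, if y = t ∨ ¬ r t y then w y else 0 using 1
      · exact Finset.sum_congr rfl fun y _ => by split_ifs <;> rfl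
      rw [hstep, Finset.sum_add_distrib,
        Finset.sum_ite_eq' w.support t (fun y => w y),
        Finset.sum_ite_eq' w.support (-t) (fun y => w y),
        if_pos (hTV htT)]
      by_cases h2 : -t ∈ w.support
      · rw [if_pos h2]
      · rw [if_neg h2, Finsupp.notMem_support_iff.mp h2]
    set e := Finset.equivFinOfCardEq hTcard with he
    set v : Fin (d+1) → EuclideanSpace ℝ (Fin (d+1)) := fun i => ((e.symm i : T) : _)
      with hvdef
    have hvT : ∀ i, v i ∈ T := fun i => (e.symm i).2
    have hvinj : Function.Injective v := by
      intro i j h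
      have : e.symm i = e.symm j := Subtype.coe_injective h
      exact e.symm.injective this
    have hvnorm : ∀ i, ‖v i‖ = 1 := fun i => hTnorm _ (hvT i)
    have hON : Orthonormal ℝ v := by
      constructor
      · exact hvnorm
      · intro i j hij
        exact hTcl _ (hvT i) _ (hvT j) (fun hh => hij (hvinj hh))
    refine ⟨v, fun i => w (v i), fun i => w (-(v i)), hON,
      fun i => hpos _, fun i => hpos _, fun i => hclassmass _ (hvT i), ?_⟩
    ext x
    rw [Finsupp.finset_sum_apply]
    by_cases hx : x ∈ w.support
    · obtain ⟨t, htT, hxt, hxorth⟩ := hcov2 x hx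
      have hx_pm : x = t ∨ x = -t := hpm' x hx t htT hxorth
      set i₀ := e ⟨t, htT⟩ with hi₀
      have hvi₀ : v i₀ = t := by
        show ((e.symm (e ⟨t, htT⟩) : T) : _) = t
        rw [Equiv.symm_apply_apply]
      have hside : ∀ j ∈ Finset.univ, j ≠ i₀ →
          (Finsupp.single (v j) (w (v j)) + Finsupp.single (-v j) (w (-v j))) x = 0 := by
        intro j _ hj
        have hvjt : v j ≠ t := by
          intro hh
          exact hj (hvinj (by rw [hh, hvi₀]))
        have hrxvj : r x (v j) := hxorth (v j) (hvT j) hvjt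
        have h1 : v j ≠ x := by
          intro hh
          subst hh
          exact hirr _ hx hrxvj
        have h2 : -(v j) ≠ x := by
          intro hh
          have : (⟪x, v j⟫ : ℝ) = 0 := hrxvj
          rw [← hh, inner_neg_left, hTinner _ (hvT j)] at this
          norm_num at this
        rw [Finsupp.add_apply, Finsupp.single_apply, Finsupp.single_apply,
          if_neg h1, if_neg h2, add_zero]
      have hnm : i₀ ∉ Finset.univ →
          (Finsupp.single (v i₀) (w (v i₀)) + Finsupp.single (-v i₀) (w (-v i₀))) x = 0 :=
        fun h => absurd (Finset.mem_univ i₀) h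
      rw [Finset.sum_eq_single i₀ hside hnm, Finsupp.add_apply,
        Finsupp.single_apply, Finsupp.single_apply, hvi₀]
      rcases hx_pm with h | h
      · rw [h, if_pos rfl, if_neg (fun hh => (htneT t htT) hh.symm), add_zero]
      · rw [h, if_neg (htneT t htT), if_pos rfl, zero_add]
    · have hx0 : w x = 0 := Finsupp.notMem_support_iff.mp hx
      rw [hx0]
      symm
      apply Finset.sum_eq_zero
      intro j _
      rw [Finsupp.add_apply, Finsupp.single_apply, Finsupp.single_apply]
      by_cases h1 : v j = x
      · by_cases h2 : -(v j) = x
        · rw [if_pos h1, if_pos h2]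
          show w (v j) + w (-v j) = 0
          rw [h1] at h2
          rw [h1, hx0, h2, hx0]
          ring
        · rw [if_pos h1, if_neg h2]
          show w (v j) + 0 = 0
          rw [h1, hx0, add_zero]
      · by_cases h2 : -(v j) = x
        · rw [if_neg h1, if_pos h2]
          show 0 + w (-v j) = 0
          rw [h2, hx0, zero_add]
        · rw [if_neg h1, if_neg h2, add_zero]
  · -- structure implies equality
    rintro ⟨v, a, b, hv, ha, hb, hab, hw⟩
    have hvnorm : ∀ i, ‖v i‖ = 1 := hv.1
    have hvorth : ∀ i j, i ≠ j → (⟪v i, v j⟫ : ℝ) = 0 := fun i j h => hv.2 h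
    have hvinner1 : ∀ i, (⟪v i, v i⟫ : ℝ) = 1 := by
      intro i
      rw [real_inner_self_eq_norm_sq, hvnorm i]
      norm_num
    have hvij : ∀ i j, v i = v j → i = j := by
      intro i j h
      by_contra hne
      have h0 := hvorth i j hne
      rw [h, hvinner1 j] at h0
      norm_num at h0
    have hvnij : ∀ i j, v i ≠ -v j := by
      intro i j h
      rcases eq_or_ne i j with rfl | hne
      · have h2 : (⟪v i, v i⟫ : ℝ) = -1 := by
          nth_rewrite 1 [h]
          rw [inner_neg_left, hvinner1 i]
        rw [hvinner1 i] at h2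
        norm_num at h2
      · have h0 := hvorth i j hne
        rw [h, inner_neg_left, hvinner1 j] at h0
        norm_num at h0
    have hwv : ∀ i, w (v i) = a i := by
      intro i
      rw [hw, Finsupp.finset_sum_apply]
      rw [Finset.sum_eq_single i (fun j _ hj => by
        rw [Finsupp.add_apply, Finsupp.single_apply, Finsupp.single_apply,
          if_neg (fun hh => hj (hvij j i hh)),
          if_neg (fun hh => hvnij i j hh.symm), add_zero])
        (fun h => absurd (Finset.mem_univ i) h)]
      rw [Finsupp.add_apply, Finsupp.single_apply, Finsupp.single_apply,
        if_pos rfl, if_neg (fun hh => hvnij i i hh.symm), add_zero]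
    have hwnv : ∀ i, w (-v i) = b i := by
      intro i
      rw [hw, Finsupp.finset_sum_apply]
      rw [Finset.sum_eq_single i (fun j _ hj => by
        rw [Finsupp.add_apply, Finsupp.single_apply, Finsupp.single_apply,
          if_neg (fun hh => hvnij j i hh),
          if_neg (fun hh => hj (hvij j i (neg_inj.mp hh))), add_zero])
        (fun h => absurd (Finset.mem_univ i) h)]
      rw [Finsupp.add_apply, Finsupp.single_apply, Finsupp.single_apply,
        if_neg (fun hh => hvnij i i hh), if_pos rfl, zero_add]
    set φ : Fin (d+1) × Bool → EuclideanSpace ℝ (Fin (d+1)) :=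
      fun p => if p.2 then v p.1 else -v p.1 with hφ
    have hφt : ∀ i, φ (i, true) = v i := fun i => rfl
    have hφf : ∀ i, φ (i, false) = -v i := fun i => rfl
    set U : Finset (EuclideanSpace ℝ (Fin (d+1))) := Finset.image φ Finset.univ with hU
    have hsub : w.support ⊆ U := by
      intro x hx
      have hx0 : w x ≠ 0 := Finsupp.mem_support_iff.mp hx
      rw [hw, Finsupp.finset_sum_apply] at hx0
      obtain ⟨j, _, hj⟩ := Finset.exists_ne_zero_of_sum_ne_zero hx0
      rw [Finsupp.add_apply, Finsupp.single_apply, Finsupp.single_apply] at hj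
      by_cases h1 : v j = x
      · exact Finset.mem_image.mpr ⟨(j, true), Finset.mem_univ _, (hφt j).trans h1⟩
      · by_cases h2 : -v j = x
        · exact Finset.mem_image.mpr ⟨(j, false), Finset.mem_univ _, (hφf j).trans h2⟩
        · rw [if_neg h1, if_neg h2, add_zero] at hj
          exact absurd rfl hj
    have hQU : Qf r w.support w = Qf r U w :=
      Qf_subset hsub w (fun x _ hx => Finsupp.notMem_support_iff.mp hx)
    have hφinj : ∀ p ∈ (Finset.univ : Finset (Fin (d+1) × Bool)),
        ∀ q ∈ Finset.univ, φ p = φ q → p = q := by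
      rintro ⟨i, si⟩ - ⟨j, sj⟩ - h
      cases si <;> cases sj
      · rw [hφf, hφf, neg_inj] at h
        rw [hvij i j h]
      · rw [hφf, hφt] at h
        exact absurd h.symm (hvnij j i)
      · rw [hφt, hφf] at h
        exact absurd h (hvnij i j)
      · rw [hφt, hφt] at h
        rw [hvij i j h]
    have hrφ : ∀ p q : Fin (d+1) × Bool, r (φ p) (φ q) ↔ p.1 ≠ q.1 := by
      rintro ⟨i, si⟩ ⟨j, sj⟩
      show (⟪φ (i, si), φ (j, sj)⟫ : ℝ) = 0 ↔ i ≠ j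
      constructor
      · intro h hij
        subst hij
        cases si <;> cases sj <;>
          simp only [hφt, hφf, inner_neg_left, inner_neg_right, neg_neg] at h <;>
          rw [hvinner1 i] at h <;> norm_num at h
      · intro hij
        cases si <;> cases sj <;>
          simp only [hφt, hφf, inner_neg_left, inner_neg_right, neg_neg] <;>
          rw [hvorth i j hij] <;> norm_num
    have hQimage : Qf r U w = ∑ p : Fin (d+1) × Bool, ∑ q : Fin (d+1) × Bool,
        if r (φ p) (φ q) then w (φ p) * w (φ q) else 0 := by
      rw [hU]
      unfold Qf
      rw [Finset.sum_image hφinj]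
      exact Finset.sum_congr rfl fun p _ => by rw [Finset.sum_image hφinj]
    have hcnt : ∀ (i : Fin (d+1)) (A : ℝ),
        (∑ j : Fin (d+1), if i ≠ j then A else 0) = d * A := by
      intro i A
      have hpt : ∀ j, (if i ≠ j then A else 0) = A - (if i = j then A else 0) := by
        intro j
        rcases eq_or_ne i j with rfl | h
        · simp
        · simp [h]
      rw [Finset.sum_congr rfl (fun j _ => hpt j), Finset.sum_sub_distrib,
        Finset.sum_const, Finset.sum_ite_eq Finset.univ i (fun _ => A),
        if_pos (Finset.mem_univ i), Finset.card_univ, Fintype.card_fin, nsmul_eq_mul]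
      push_cast
      ring
    have hsumφ : ∀ j, w (φ (j, true)) + w (φ (j, false)) = 1/((d:ℝ)+1) := by
      intro j
      rw [hφt, hφf, hwv, hwnv]
      exact hab j
    have htotal : Qf r U w = (d:ℝ) * (1/((d:ℝ)+1)) := by
      rw [hQimage]
      have step1 : ∀ p : Fin (d+1) × Bool,
          (∑ q : Fin (d+1) × Bool, if r (φ p) (φ q) then w (φ p) * w (φ q) else 0)
          = w (φ p) * (1/((d:ℝ)+1)) * d := by
        intro p
        rw [Fintype.sum_prod_type]
        have inner1 : ∀ j, (∑ sq : Bool,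
            if r (φ p) (φ (j, sq)) then w (φ p) * w (φ (j, sq)) else 0)
            = if p.1 ≠ j then w (φ p) * (1/((d:ℝ)+1)) else 0 := by
          intro j
          by_cases h : p.1 = j
          · rw [if_neg (by simpa using h)]
            apply Finset.sum_eq_zero
            intro sq _
            rw [if_neg (fun hc => ((hrφ p (j, sq)).mp hc) h)]
          · rw [if_pos h]
            rw [Finset.sum_congr rfl (fun sq _ =>
              if_pos ((hrφ p (j, sq)).mpr h))]
            rw [Fintype.sum_bool, ← mul_add, hsumφ j]
        rw [Finset.sum_congr rfl (fun j _ => inner1 j), hcnt p.1]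
        ring
      rw [Finset.sum_congr rfl (fun p _ => step1 p), Fintype.sum_prod_type]
      have step2 : ∀ i, (∑ s : Bool, w (φ (i, s)) * (1/((d:ℝ)+1)) * d)
          = (1/((d:ℝ)+1)) * (1/((d:ℝ)+1)) * d := by
        intro i
        rw [Fintype.sum_bool, ← add_mul, ← add_mul, hsumφ i]
      rw [Finset.sum_congr rfl (fun i _ => step2 i), Finset.sum_const,
        Finset.card_univ, Fintype.card_fin, nsmul_eq_mul]
      push_cast
      field_simp
    rw [hQU, htotal]
    field_simp
    ring
end
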